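/- arXiv:2403.19008 — 5 statements merged into one kernel-verified Lean document; each statement's English description precedes it below -/
import Mathlib

section
/- Let X and Y be Noetherian schemes of finite Krull dimension whose underlying topological spaces are catenary, and let f : X → Y be an integral morphism of schemes. Assume that every irreducible component of X is equicodimensional. Then f is catenarious: for every pair of irreducible closed subsets T ⊆ T′ of X one has codim(T, T′) ≥ codim(cl(f(T)), cl(f(T′))). -/
open TopologicalSpace

section TopDefs

variable {α β : Type*} [TopologicalSpace α] [TopologicalSpace β]

/-- The closure of a point, as an irreducible closed subset. -/
noncomputable def ptIC (x : α) : IrreducibleCloseds α :=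
  ⟨closure {x}, isIrreducible_singleton.closure, isClosed_closure⟩

/-- `codim(T, T')`: the supremum of lengths `n` of chains
`T = T₀ ⊊ T₁ ⊊ ⋯ ⊊ Tₙ ⊆ T'` of irreducible closed subsets. -/
noncomputable def icCodim (T T' : IrreducibleCloseds α) : ℕ∞ :=
  Set.chainHeight {Z : IrreducibleCloseds α | T < Z ∧ Z ≤ T'} (· < ·)

/-- The codimension of an irreducible closed subset in the whole space. -/
noncomputable def spCodim (T : IrreducibleCloseds α) : ℕ∞ :=
  Set.chainHeight {Z : IrreducibleCloseds α | T < Z} (· < ·)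

/-- The closure of the image of an irreducible closed subset under a continuous map,
as an irreducible closed subset. -/
noncomputable def imageIC (f : α → β) (hf : Continuous f) (T : IrreducibleCloseds α) :
    IrreducibleCloseds β :=
  ⟨closure (f '' (T : Set α)),
    (T.isIrreducible.image f hf.continuousOn).closure, isClosed_closure⟩

/-- `p` is a maximal chain of irreducible closed subsets starting with `T` and
ending with `T'`: no further irreducible closed subset can be inserted. -/
def IsMaxChainBtw (T T' : IrreducibleCloseds α) (p : LTSeries (IrreducibleCloseds α)) : Prop :=
  p.head = T ∧ p.last = T' ∧
    ∀ i : Fin p.length, ∀ Z : IrreducibleCloseds α,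
      ¬ (p.toFun i.castSucc < Z ∧ Z < p.toFun i.succ)

/-- A topological space is catenary if for all irreducible closed subsets `T ⊆ T'`,
every maximal chain of irreducible closed subsets starting with `T` and ending with `T'`
has the same length. -/
def CatenarySpace (α : Type*) [TopologicalSpace α] : Prop :=
  ∀ T T' : IrreducibleCloseds α, T ≤ T' →
    ∀ p q : LTSeries (IrreducibleCloseds α),
      IsMaxChainBtw T T' p → IsMaxChainBtw T T' q → p.length = q.length

/-- A continuous map is catenarious if
`codim(T, T') ≥ codim(cl(f(T)), cl(f(T')))` for all irreducible closed `T ⊆ T'`. -/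
def Catenarious (f : α → β) (hf : Continuous f) : Prop :=
  ∀ T T' : IrreducibleCloseds α, T ≤ T' →
    icCodim (imageIC f hf T) (imageIC f hf T') ≤ icCodim T T'

/-- `T'` is an irreducible component of the subset `s`:
a maximal irreducible subset of `s`. -/
def IsIrredComponentOf (T' s : Set α) : Prop :=
  T' ⊆ s ∧ IsIrreducible T' ∧ ∀ W : Set α, IsIrreducible W → T' ⊆ W → W ⊆ s → W = T'

/-- A continuous map `f` is weakly catenarious if for every point `y`, every irreducible
component `T'` of `f ⁻¹ y`, and every irreducible closed `T ⊆ cl(T')` with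
`codim(T, cl(T')) = 1`, one has `codim(cl(f(T)), cl(f(T'))) ≤ 1`. -/
def WeaklyCatenarious (f : α → β) (hf : Continuous f) : Prop :=
  ∀ y : β, ∀ T' : Set α, ∀ h : IsIrredComponentOf T' (f ⁻¹' {y}),
    ∀ T : IrreducibleCloseds α, (T : Set α) ⊆ closure T' →
      icCodim T ⟨closure T', h.2.1.closure, isClosed_closure⟩ = 1 →
      icCodim (imageIC f hf T)
        ⟨closure (f '' T'), (h.2.1.image f hf.continuousOn).closure, isClosed_closure⟩ ≤ 1

/-- A space is biequidimensional if all maximal chains of irreducible closed subsets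
have the same length. -/
def BiequidimensionalSpace (α : Type*) [TopologicalSpace α] : Prop :=
  ∀ p q : LTSeries (IrreducibleCloseds α),
    (IsMin p.head ∧ IsMax p.last ∧ ∀ i : Fin p.length, ∀ Z : IrreducibleCloseds α,
      ¬ (p.toFun i.castSucc < Z ∧ Z < p.toFun i.succ)) →
    (IsMin q.head ∧ IsMax q.last ∧ ∀ i : Fin q.length, ∀ Z : IrreducibleCloseds α,
      ¬ (q.toFun i.castSucc < Z ∧ Z < q.toFun i.succ)) →
    p.length = q.length

/-- `x` is a generic point of (an irreducible component of) the fiber `f ⁻¹ y`: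
it lies in the fiber and admits no strict generalization inside the fiber. -/
def IsFiberGeneric (f : α → β) (y : β) (x : α) : Prop :=
  f x = y ∧ ∀ z : α, f z = y → x ∈ closure {z} → z ∈ closure {x}

end TopDefs

/-- A morphism of schemes is flat if for every point the induced map of local rings
(stalks) is flat. -/
def SchemeHomFlat {X Y : AlgebraicGeometry.Scheme} (f : X ⟶ Y) : Prop :=
  ∀ x : X, RingHom.Flat (f.stalkMap x).hom

section ChainAux

variable {γ : Type*} [PartialOrder γ]

lemma series_le_chainHeight {s : Set γ} (p : LTSeries γ) (hp : ∀ i, p i ∈ s) :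
    (p.length + 1 : ℕ∞) ≤ s.chainHeight (· < ·) := by
  have hc : IsChain (· < ·) (Set.range p.toFun) := by
    rintro _ ⟨i, rfl⟩ _ ⟨j, rfl⟩ hne
    rcases lt_trichotomy i j with h | h | h
    · exact Or.inl (p.strictMono h)
    · exact absurd (congrArg p.toFun h) hne
    · exact Or.inr (p.strictMono h)
  have h1 := Set.encard_le_chainHeight_of_isChain s _ (by rintro _ ⟨i, rfl⟩; exact hp i) hc
  have h2 := p.strictMono.injective.encard_range
  simpa using h2.trans h1

lemma exists_series_of_chain_aux : ∀ (n : ℕ) (t : Set γ), IsChain (· < ·) t →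
    t.encard = n + 1 → ∃ p : LTSeries γ, p.length = n ∧ ∀ i, p i ∈ t := by
  intro n
  induction n with
  | zero =>
    intro t _ ht
    obtain ⟨x, rfl⟩ := Set.encard_eq_one.mp (by simpa using ht)
    exact ⟨RelSeries.singleton _ x, rfl, fun i => rfl⟩
  | succ m ih =>
    intro t hc ht
    have hfin : t.Finite := Set.finite_of_encard_eq_coe (k := m + 1 + 1) (by rw [ht]; norm_cast)
    have hne : t.Nonempty := by
      rw [← Set.encard_pos, ht]; exact_mod_cast Nat.succ_pos _
    obtain ⟨x, hx⟩ := hfin.exists_maximal hne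
    have ht' : (t \ {x}).encard = m + 1 := by
      rw [Set.encard_sdiff_singleton_of_mem hx.1, ht]
      norm_cast
    obtain ⟨p, hplen, hpmem⟩ := ih (t \ {x}) (hc.mono Set.diff_subset) ht'
    have hlast : p.last ∈ t \ {x} := hpmem _
    have hlt : p.last < x := by
      rcases hc hlast.1 hx.1 (fun h => hlast.2 h) with h | h
      · exact h
      · exact absurd (hx.2 hlast.1 h.le) (not_le_of_gt h)
    refine ⟨p.snoc x hlt, by rw [RelSeries.snoc_length, hplen], fun i => ?_⟩
    rcases RelSeries.mem_snoc.mp ⟨i, rfl⟩ with ⟨j, hj⟩ | heq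
    · rw [← hj]; exact (hpmem j).1
    · rw [heq]; exact hx.1

lemma exists_series_of_le_chainHeight (s : Set γ) {n : ℕ}
    (hn : (n + 1 : ℕ∞) ≤ s.chainHeight (· < ·)) :
    ∃ p : LTSeries γ, p.length = n ∧ ∀ i, p i ∈ s := by
  obtain ⟨t, hts, htc, hchain⟩ := Set.exists_isChain_of_le_chainHeight (r := (· < ·)) (s := s)
    (n + 1) (by exact_mod_cast hn)
  obtain ⟨p, hplen, hpmem⟩ := exists_series_of_chain_aux n t hchain (by rw [htc]; norm_cast)
  exact ⟨p, hplen, fun i => hts (hpmem i)⟩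

lemma enat_le_of_forall_nat_le {a b : ℕ∞} (h : ∀ n : ℕ, (n : ℕ∞) ≤ a → (n : ℕ∞) ≤ b) :
    a ≤ b := by
  induction a using ENat.recTopCoe with
  | top =>
    rw [top_le_iff]
    by_contra hb
    lift b to ℕ using hb
    have := h (b + 1) le_top
    rw [Nat.cast_le] at this
    omega
  | coe n => exact h n le_rfl

lemma chainHeight_ne_top_of_krullDim_ne_top (hd : Order.krullDim γ ≠ ⊤) (s : Set γ) :
    s.chainHeight (· < ·) ≠ ⊤ := by
  intro h
  apply hd
  have key : ∀ n : ℕ, ∃ p : LTSeries γ, p.length = n := by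
    intro n
    obtain ⟨p, hp, -⟩ := exists_series_of_le_chainHeight s (n := n) (by rw [h]; exact le_top)
    exact ⟨p, hp⟩
  have : InfiniteDimensionalOrder γ := ⟨key⟩
  exact Order.krullDim_eq_top

/-- Insert an element into an `LTSeries`, keeping head and last. -/
lemma exists_insert_series (p : LTSeries γ) (i : Fin p.length) (Z : γ)
    (h1 : p.toFun i.castSucc < Z) (h2 : Z < p.toFun i.succ) :
    ∃ q : LTSeries γ, q.length = p.length + 1 ∧ q.head = p.head ∧ q.last = p.last := by
  refine ⟨((p.take i.castSucc).snoc Z (by rwa [RelSeries.last_take])).append (p.drop i.succ)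
    (by rw [RelSeries.last_snoc, RelSeries.head_drop]; exact h2), ?_, ?_, ?_⟩
  · have h3 : i.1 < p.length := i.2
    show ((p.take i.castSucc).snoc Z _).length + (p.drop i.succ).length + 1 = p.length + 1
    rw [RelSeries.snoc_length, RelSeries.take_length, RelSeries.drop_length]
    simp only [Fin.coe_castSucc, Fin.val_succ]
    omega
  · rw [RelSeries.head_append, RelSeries.head_snoc, RelSeries.head_take]
  · rw [RelSeries.last_append, RelSeries.last_drop]

end ChainAux
section TopAux

variable {α β : Type*} [TopologicalSpace α] [TopologicalSpace β]

/-- dimension-like invariant: chain height of the irreducible closeds contained in `T`. -/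
noncomputable def chDim (T : IrreducibleCloseds α) : ℕ∞ :=
  Set.chainHeight {Z : IrreducibleCloseds α | Z ≤ T} (· < ·)

lemma icCodim_self (T : IrreducibleCloseds α) : icCodim T T = 0 := by
  rw [icCodim, Set.chainHeight_eq_zero_iff]
  ext Z
  simp only [Set.mem_setOf_eq, Set.mem_empty_iff_false, iff_false, not_and]
  exact fun h1 h2 => absurd (h1.trans_le h2) (lt_irrefl _)

lemma chDim_add_icCodim_le {A B : IrreducibleCloseds α} (h : A ≤ B) :
    chDim A + icCodim A B ≤ chDim B := by
  have n1 : Nonempty {t : Set (IrreducibleCloseds α) //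
      t ⊆ {Z | Z ≤ A} ∧ IsChain (· < ·) t} := ⟨⟨∅, Set.empty_subset _, IsChain.empty⟩⟩
  have n2 : Nonempty {t : Set (IrreducibleCloseds α) //
      t ⊆ {Z | A < Z ∧ Z ≤ B} ∧ IsChain (· < ·) t} := ⟨⟨∅, Set.empty_subset _, IsChain.empty⟩⟩
  refine ENat.iSup_add_iSup_le fun t u => ?_
  have hdisj : Disjoint t.1 u.1 := Set.disjoint_left.mpr fun a ha hb =>
    lt_irrefl a (lt_of_le_of_lt (t.2.1 ha) (u.2.1 hb).1)
  rw [← Set.encard_union_eq hdisj]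
  apply Set.encard_le_chainHeight_of_isChain
  · rintro Z (hZ | hZ)
    · exact le_trans (t.2.1 hZ) h
    · exact (u.2.1 hZ).2
  · intro a ha b hb hab
    rcases ha with ha | ha <;> rcases hb with hb | hb
    · exact t.2.2 ha hb hab
    · exact Or.inl (lt_of_le_of_lt (t.2.1 ha) (u.2.1 hb).1)
    · exact Or.inr (lt_of_le_of_lt (t.2.1 hb) (u.2.1 ha).1)
    · exact u.2.2 ha hb hab

lemma exists_genericPt [QuasiSober α] (T : IrreducibleCloseds α) :
    ∃ x : α, closure ({x} : Set α) = (T : Set α) :=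
  ⟨T.isIrreducible.genericPoint, T.isIrreducible.closure_genericPoint T.isClosed⟩

lemma imageIC_coe (f : α → β) (hf : Continuous f) (T : IrreducibleCloseds α) :
    (imageIC f hf T : Set β) = closure (f '' (T : Set α)) := rfl

lemma ptIC_coe (x : α) : (ptIC x : Set α) = closure {x} := rfl

lemma imageIC_of_genericPt {f : α → β} (hf : Continuous f) {T : IrreducibleCloseds α} {x : α}
    (hx : closure ({x} : Set α) = (T : Set α)) :
    (imageIC f hf T : Set β) = closure {f x} := by
  apply subset_antisymm
  · rw [imageIC_coe]
    apply closure_minimal _ isClosed_closure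
    rw [← hx]
    calc f '' closure {x} ⊆ closure (f '' {x}) := image_closure_subset_closure_image hf
      _ = closure {f x} := by rw [Set.image_singleton]
  · apply closure_minimal _ isClosed_closure
    rw [Set.singleton_subset_iff]
    exact subset_closure ⟨x, by
      show x ∈ (T : Set α); rw [← hx]; exact subset_closure rfl, rfl⟩

lemma imageIC_mono {f : α → β} (hf : Continuous f) {T T' : IrreducibleCloseds α}
    (h : T ≤ T') : imageIC f hf T ≤ imageIC f hf T' := by
  show (imageIC f hf T : Set β) ⊆ (imageIC f hf T' : Set β)
  exact closure_mono (Set.image_mono h)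

lemma imageIC_strictMono [QuasiSober α] [QuasiSober β] [T0Space β] {f : α → β}
    (hf : Continuous f) (hinc : ∀ x x' : α, f x = f x' → x ⤳ x' → x = x') :
    StrictMono (imageIC f hf) := by
  intro T T' hTT'
  refine lt_of_le_of_ne (imageIC_mono hf hTT'.le) ?_
  intro he
  obtain ⟨a, ha⟩ := exists_genericPt T
  obtain ⟨b, hb⟩ := exists_genericPt T'
  have h1 : closure ({f a} : Set β) = closure ({f b} : Set β) := by
    rw [← imageIC_of_genericPt hf ha, he, imageIC_of_genericPt hf hb]
  have hab : f a = f b :=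
    (show IsGenericPoint (f a) (closure {f b}) from h1).eq isGenericPoint_closure
  have hba : b ⤳ a := by
    rw [specializes_iff_mem_closure, hb]
    have hmem : a ∈ (T : Set α) := by rw [← ha]; exact subset_closure rfl
    exact (show (T : Set α) ⊆ (T' : Set α) from hTT'.le) hmem
  have : b = a := hinc b a hab.symm hba
  subst this
  exact absurd (SetLike.coe_injective (ha.symm.trans hb) : T = T') hTT'.ne

/-- lift an irreducible closed subset of the closure of the image. -/
lemma exists_le_of_le_imageIC [QuasiSober α] [QuasiSober β] {f : α → β} (hf : Continuous f)
    (hspec : SpecializingMap f) {T : IrreducibleCloseds α} {W : IrreducibleCloseds β}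
    (hW : W ≤ imageIC f hf T) :
    ∃ S : IrreducibleCloseds α, S ≤ T ∧ imageIC f hf S = W := by
  obtain ⟨a, ha⟩ := exists_genericPt T
  obtain ⟨w, hw⟩ := exists_genericPt W
  have hwmem : w ∈ closure ({f a} : Set β) := by
    rw [← imageIC_of_genericPt hf ha]
    have hmem : w ∈ (W : Set β) := by rw [← hw]; exact subset_closure rfl
    exact (show (W : Set β) ⊆ _ from hW) hmem
  obtain ⟨b, hb, hfb⟩ := hspec.closure_singleton_subset a hwmem
  refine ⟨ptIC b, ?_, ?_⟩
  · show (ptIC b : Set α) ⊆ (T : Set α)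
    rw [ptIC_coe, ← ha]
    exact closure_minimal (Set.singleton_subset_iff.mpr hb) isClosed_closure
  · apply SetLike.coe_injective
    rw [imageIC_of_genericPt hf (show closure ({b} : Set α) = (ptIC b : Set α) from rfl),
      hfb, hw]

lemma lift_series [QuasiSober α] [QuasiSober β] {f : α → β} (hf : Continuous f)
    (hspec : SpecializingMap f) :
    ∀ (n : ℕ) (T : IrreducibleCloseds α) (q : LTSeries (IrreducibleCloseds β)),
      q.length = n → q.last = imageIC f hf T →
      ∃ p : LTSeries (IrreducibleCloseds α), p.length = n ∧ p.last = T := by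
  intro n
  induction n with
  | zero => exact fun T q _ _ => ⟨RelSeries.singleton _ T, rfl, rfl⟩
  | succ m ih =>
    intro T q hq hlast
    have hne : q.length ≠ 0 := by omega
    have hWlt : q.eraseLast.last < q.last := q.eraseLast_last_rel_last hne
    obtain ⟨S, hST, hSW⟩ := exists_le_of_le_imageIC hf hspec
      (T := T) (W := q.eraseLast.last) (by rw [← hlast]; exact hWlt.le)
    have hSTlt : S < T := by
      refine lt_of_le_of_ne hST ?_
      rintro rfl
      rw [← hSW, ← hlast] at hWlt
      exact lt_irrefl _ hWlt
    obtain ⟨p', hp'len, hp'last⟩ := ih S q.eraseLast (by simp [hq]) hSW.symm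
    exact ⟨p'.snoc T (hp'last ▸ hSTlt), by rw [RelSeries.snoc_length, hp'len], by simp⟩

end TopAux
section TopAux2

variable {α β : Type*} [TopologicalSpace α] [TopologicalSpace β]

lemma chDim_imageIC [QuasiSober α] [QuasiSober β] [T0Space β] {f : α → β}
    (hf : Continuous f) (hspec : SpecializingMap f)
    (hinc : ∀ x x' : α, f x = f x' → x ⤳ x' → x = x') (T : IrreducibleCloseds α) :
    chDim (imageIC f hf T) = chDim T := by
  apply le_antisymm
  · apply enat_le_of_forall_nat_le
    intro n hn
    match n with
    | 0 => exact bot_le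
    | (m + 1) =>
      obtain ⟨q, hqlen, hqmem⟩ := exists_series_of_le_chainHeight _ (by exact_mod_cast hn)
      obtain ⟨S, hST, hSW⟩ := exists_le_of_le_imageIC hf hspec (hqmem (Fin.last _))
      obtain ⟨p, hplen, hplast⟩ := lift_series hf hspec m S q hqlen hSW.symm
      have : ∀ i, p i ∈ {Z : IrreducibleCloseds α | Z ≤ T} :=
        fun i => le_trans (le_trans (p.monotone (Fin.le_last i)) (le_of_eq hplast)) hST
      have hle := series_le_chainHeight p this
      rw [hplen] at hle
      exact_mod_cast hle
  · apply enat_le_of_forall_nat_le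
    intro n hn
    match n with
    | 0 => exact bot_le
    | (m + 1) =>
      obtain ⟨p, hplen, hpmem⟩ := exists_series_of_le_chainHeight _ (by exact_mod_cast hn)
      have hsm := imageIC_strictMono hf hinc
      have : ∀ i, (p.map _ hsm) i ∈ {Z : IrreducibleCloseds β | Z ≤ imageIC f hf T} :=
        fun i => imageIC_mono hf (hpmem i)
      have hle := series_le_chainHeight _ this
      rw [show (p.map _ hsm).length = m from hplen] at hle
      exact_mod_cast hle

variable {α : Type*} [TopologicalSpace α]

lemma exists_maxChain (hd : Order.krullDim (IrreducibleCloseds α) ≠ ⊤)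
    {T T' : IrreducibleCloseds α} (h : T ≤ T') :
    ∃ p : LTSeries (IrreducibleCloseds α),
      IsMaxChainBtw T T' p ∧ (p.length : ℕ∞) = icCodim T T' := by
  rcases eq_or_lt_of_le h with rfl | hlt
  · refine ⟨RelSeries.singleton _ T, ⟨rfl, rfl, fun i => Fin.elim0 i⟩, ?_⟩
    rw [icCodim_self]; rfl
  · set s : Set (IrreducibleCloseds α) := {Z | T < Z ∧ Z ≤ T'} with hs
    have hT's : T' ∈ s := ⟨hlt, le_rfl⟩
    have hfin : s.chainHeight (· < ·) ≠ ⊤ := chainHeight_ne_top_of_krullDim_ne_top hd s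
    have hne : s.chainHeight (· < ·) ≠ 0 := by
      intro h0
      rw [Set.chainHeight_eq_zero_iff] at h0
      rw [h0] at hT's
      exact hT's
    obtain ⟨c, hc⟩ := WithTop.ne_top_iff_exists.mp hfin
    have hc0 : c ≠ 0 := by rintro rfl; exact hne (by exact_mod_cast hc.symm)
    obtain ⟨m, rfl⟩ : ∃ m, c = m + 1 := ⟨c - 1, by omega⟩
    obtain ⟨q, hqlen, hqmem⟩ := exists_series_of_le_chainHeight s
      (n := m) (by rw [← hc]; norm_cast)
    have hcount : ∀ r : LTSeries (IrreducibleCloseds α), (∀ i, r i ∈ s) →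
        r.length + 1 ≤ m + 1 := by
      intro r hr
      have h1 := series_le_chainHeight r hr
      rw [← hc] at h1
      exact Nat.cast_le.mp (by exact_mod_cast h1)
    have hqlast : q.last = T' := by
      by_contra hne'
      have hql : q.last < T' := lt_of_le_of_ne (hqmem _).2 hne'
      have h2 := hcount (q.snoc T' hql) (fun i => by
        rcases RelSeries.mem_snoc.mp ⟨i, rfl⟩ with ⟨j, hj⟩ | heq
        · rw [← hj]; exact hqmem j
        · rw [heq]; exact hT's)
      rw [RelSeries.snoc_length, hqlen] at h2
      omega
    have hqhead : T < q.head := (hqmem 0).1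
    refine ⟨q.cons T hqhead, ⟨rfl, by rw [RelSeries.last_cons, hqlast], ?_⟩, by
      show ((q.cons T hqhead).length : ℕ∞) = s.chainHeight (· < ·)
      rw [RelSeries.cons_length, hqlen]
      exact hc⟩
    intro i Z hZ
    obtain ⟨h1, h2⟩ := hZ
    obtain ⟨q2, hq2len, hq2head, hq2last⟩ := exists_insert_series (q.cons T hqhead) i Z h1 h2
    have hq2ne : q2.length ≠ 0 := by rw [hq2len]; exact Nat.succ_ne_zero _
    have htail : ∀ j, (q2.tail hq2ne) j ∈ s := by
      intro j
      constructor
      · have h3 := q2.strictMono (Fin.succ_pos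
          (Fin.cast (Nat.succ_pred_eq_of_pos (Nat.pos_of_ne_zero hq2ne)) j))
        have h6 : q2.head = T := by rw [hq2head]; rfl
        exact lt_of_eq_of_lt h6.symm h3
      · have h7 := LTSeries.monotone (q2.tail hq2ne) (Fin.le_last j)
        rw [RelSeries.apply_last, RelSeries.last_tail, hq2last, RelSeries.last_cons,
          hqlast] at h7
        exact h7
    have h8 := hcount (q2.tail hq2ne) htail
    rw [RelSeries.tail_length, hq2len, RelSeries.cons_length, hqlen] at h8
    omega

end TopAux2
section TopAux3

variable {α : Type*} [TopologicalSpace α]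

lemma exists_maxChain_from_min (hd : Order.krullDim (IrreducibleCloseds α) ≠ ⊤)
    (T : IrreducibleCloseds α) :
    ∃ p : LTSeries (IrreducibleCloseds α),
      IsMin p.head ∧ IsMaxChainBtw p.head T p ∧ ((p.length : ℕ∞) + 1 = chDim T) := by
  set s : Set (IrreducibleCloseds α) := {Z | Z ≤ T} with hs
  have hTs : T ∈ s := show T ≤ T from le_rfl
  have hfin : s.chainHeight (· < ·) ≠ ⊤ := chainHeight_ne_top_of_krullDim_ne_top hd s
  have hne : s.chainHeight (· < ·) ≠ 0 := by
    intro h0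
    rw [Set.chainHeight_eq_zero_iff] at h0
    rw [h0] at hTs
    exact hTs
  obtain ⟨c, hc⟩ := WithTop.ne_top_iff_exists.mp hfin
  have hc0 : c ≠ 0 := by rintro rfl; exact hne (by exact_mod_cast hc.symm)
  obtain ⟨m, rfl⟩ : ∃ m, c = m + 1 := ⟨c - 1, by omega⟩
  obtain ⟨q, hqlen, hqmem⟩ := exists_series_of_le_chainHeight s
    (n := m) (by rw [← hc]; norm_cast)
  have hcount : ∀ r : LTSeries (IrreducibleCloseds α), (∀ i, r i ∈ s) →
      r.length + 1 ≤ m + 1 := by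
    intro r hr
    have h1 := series_le_chainHeight r hr
    rw [← hc] at h1
    exact Nat.cast_le.mp (by exact_mod_cast h1)
  have hqlast : q.last = T := by
    by_contra hne'
    have hql : q.last < T := lt_of_le_of_ne (hqmem _) hne'
    have h2 := hcount (q.snoc T hql) (fun i => by
      rcases RelSeries.mem_snoc.mp ⟨i, rfl⟩ with ⟨j, hj⟩ | heq
      · rw [← hj]; exact hqmem j
      · rw [heq]; exact hTs)
    rw [RelSeries.snoc_length, hqlen] at h2
    omega
  have hqmin : IsMin q.head := by
    by_contra hmin
    obtain ⟨W, hW⟩ := not_isMin_iff.mp hmin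
    have h2 := hcount (q.cons W hW) (fun i => by
      have h7 := LTSeries.monotone (q.cons W hW) (Fin.le_last i)
      rw [RelSeries.apply_last, RelSeries.last_cons, hqlast] at h7
      exact h7)
    rw [RelSeries.cons_length, hqlen] at h2
    omega
  refine ⟨q, hqmin, ⟨rfl, hqlast, ?_⟩, by
    show ((q.length : ℕ∞) + 1 = s.chainHeight (· < ·))
    rw [hqlen, ← hc]
    norm_cast⟩
  intro i Z hZ
  obtain ⟨h1, h2⟩ := hZ
  obtain ⟨q2, hq2len, hq2head, hq2last⟩ := exists_insert_series q i Z h1 h2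
  have h8 := hcount q2 (fun j => by
    have h7 := q2.monotone (Fin.le_last j)
    rw [RelSeries.apply_last, hq2last, hqlast] at h7
    exact h7)
  rw [hq2len, hqlen] at h8
  omega

lemma exists_max_above (T : IrreducibleCloseds α) :
    ∃ C : IrreducibleCloseds α, IsMax C ∧ T ≤ C := by
  obtain ⟨t, htpre, hsub, hmax⟩ := exists_preirreducible (T : Set α) T.isIrreducible.2
  have hcl : closure t = t := hmax _ htpre.closure subset_closure
  have htne : t.Nonempty := T.isIrreducible.1.mono hsub
  refine ⟨⟨t, ⟨htne, htpre⟩, by rw [← hcl]; exact isClosed_closure⟩, ?_, hsub⟩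
  intro D hD
  show (D : Set α) ⊆ t
  rw [hmax (D : Set α) D.isIrreducible.2 hD]

lemma isMaxChainBtw_smash {A B C : IrreducibleCloseds α}
    {p q : LTSeries (IrreducibleCloseds α)} (h : p.last = q.head)
    (hp : IsMaxChainBtw A B p) (hq : IsMaxChainBtw B C q) :
    IsMaxChainBtw A C (p.smash q h) := by
  obtain ⟨hp1, hp2, hp3⟩ := hp
  obtain ⟨hq1, hq2, hq3⟩ := hq
  refine ⟨by rw [RelSeries.head_smash, hp1], by rw [RelSeries.last_smash, hq2], ?_⟩
  intro i Z hZ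
  obtain ⟨h1, h2⟩ := hZ
  by_cases hi : i.1 < p.length
  · set i' : Fin p.length := ⟨i.1, hi⟩ with hi'
    have hieq : i = Fin.castAdd q.length i' := by ext; rfl
    rw [hieq] at h1 h2
    have e1 : (p.smash q h).toFun (Fin.castSucc (Fin.castAdd q.length i')) = p.toFun i'.castSucc :=
      RelSeries.smash_castAdd h i'
    have e2 : (p.smash q h).toFun (Fin.castAdd q.length i').succ = p.toFun i'.succ :=
      RelSeries.smash_succ_castAdd h i'
    exact hp3 i' Z ⟨lt_of_eq_of_lt e1.symm h1, lt_of_lt_of_eq h2 e2⟩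
  · have hi2 : i.1 - p.length < q.length := by
      have := i.2
      simp only [RelSeries.smash_length] at this
      omega
    set i' : Fin q.length := ⟨i.1 - p.length, hi2⟩ with hi'
    have hieq : i = Fin.natAdd p.length i' := by
      ext
      show i.1 = p.length + (i.1 - p.length)
      omega
    rw [hieq] at h1 h2
    have e1 : (p.smash q h).toFun (Fin.castSucc (Fin.natAdd p.length i')) = q.toFun i'.castSucc :=
      RelSeries.smash_natAdd h i'
    have e2 : (p.smash q h).toFun (Fin.natAdd p.length i').succ = q.toFun i'.succ :=
      RelSeries.smash_succ_natAdd h i'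
    rw [e1] at h1
    exact hq3 i' Z ⟨h1, lt_of_lt_of_eq h2 e2⟩

lemma chDim_le_of_catenary (hd : Order.krullDim (IrreducibleCloseds α) ≠ ⊤)
    (hc : CatenarySpace α)
    (hequi : ∀ C : IrreducibleCloseds α, IsMax C →
      ∀ T T' : IrreducibleCloseds α, IsMin T → IsMin T' → T ≤ C → T' ≤ C →
        icCodim T C = icCodim T' C)
    {T T' : IrreducibleCloseds α} (h : T ≤ T') :
    chDim T' ≤ chDim T + icCodim T T' := by
  obtain ⟨p, hpmin, hpmax, hplen⟩ := exists_maxChain_from_min hd T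
  obtain ⟨q, hqmax, hqlen⟩ := exists_maxChain hd h
  obtain ⟨C, hCmax, hT'C⟩ := exists_max_above T'
  obtain ⟨r, hrmax, hrlen⟩ := exists_maxChain hd hT'C
  obtain ⟨p', hp'min, hp'max, hp'len⟩ := exists_maxChain_from_min hd T'
  have h1 : p.last = q.head := by rw [hpmax.2.1, hqmax.1]
  have hM1 : IsMaxChainBtw p.head T' (p.smash q h1) := isMaxChainBtw_smash h1 hpmax hqmax
  have h2 : (p.smash q h1).last = r.head := by rw [hM1.2.1, hrmax.1]
  have hM2 : IsMaxChainBtw p.head C ((p.smash q h1).smash r h2) :=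
    isMaxChainBtw_smash h2 hM1 hrmax
  have h3 : p'.last = r.head := by rw [hp'max.2.1, hrmax.1]
  have hM3 : IsMaxChainBtw p'.head C (p'.smash r h3) := isMaxChainBtw_smash h3 hp'max hrmax
  have hpT : p.head ≤ T := hpmax.2.1 ▸ LTSeries.head_le_last p
  have hp'T' : p'.head ≤ T' := hp'max.2.1 ▸ LTSeries.head_le_last p'
  have hpCle : p.head ≤ C := hpT.trans (h.trans hT'C)
  have hp'Cle : p'.head ≤ C := hp'T'.trans hT'C
  obtain ⟨N, hNmax, hNlen⟩ := exists_maxChain hd hpCle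
  obtain ⟨N', hN'max, hN'len⟩ := exists_maxChain hd hp'Cle
  have e1 : ((p.smash q h1).smash r h2).length = N.length := hc _ _ hpCle _ _ hM2 hNmax
  have e2 : (p'.smash r h3).length = N'.length := hc _ _ hp'Cle _ _ hM3 hN'max
  have e3 : icCodim p.head C = icCodim p'.head C :=
    hequi C hCmax _ _ hpmin hp'min hpCle hp'Cle
  have e4 : (N.length : ℕ∞) = (N'.length : ℕ∞) := by rw [hNlen, hN'len, e3]
  have e5 : N.length = N'.length := Nat.cast_injective e4
  have e6 : p.length + q.length + r.length = p'.length + r.length := by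
    have := e1.trans (e5.trans e2.symm)
    simpa only [RelSeries.smash_length] using this
  have e7 : p'.length = p.length + q.length := by omega
  rw [← hp'len, ← hplen, ← hqlen, e7]
  push_cast
  ring_nf
  exact le_refl _

end TopAux3
section SchemeAux

open AlgebraicGeometry CategoryTheory

lemma primeSpectrum_comap_incomp {R S : Type*} [CommRing R] [CommRing S] (φ : R →+* S)
    (hφ : φ.IsIntegral) {p q : PrimeSpectrum S} (h : p ≤ q)
    (he : PrimeSpectrum.comap φ p = PrimeSpectrum.comap φ q) : p = q := by
  by_contra hne
  have hlt : p.asIdeal < q.asIdeal :=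
    lt_of_le_of_ne h (fun h' => hne (PrimeSpectrum.ext h'))
  letI : Algebra R S := φ.toAlgebra
  obtain ⟨x, hxq, hxp⟩ := SetLike.exists_of_lt hlt
  have hint : IsIntegral R x := hφ x
  have := Ideal.comap_lt_comap_of_integral_mem_sdiff (I := p.asIdeal) (J := q.asIdeal)
    hlt.le ⟨hxq, hxp⟩ hint
  have he' : p.asIdeal.comap (algebraMap R S) = q.asIdeal.comap (algebraMap R S) :=
    congrArg PrimeSpectrum.asIdeal he
  rw [he'] at this
  exact lt_irrefl _ this

universe u

lemma integral_affine_facts {X Y : Scheme.{u}} (f : X ⟶ Y) [AlgebraicGeometry.IsIntegralHom f]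
    [IsAffine Y] :
    SpecializingMap f.base ∧ ∀ x x' : X, f.base x = f.base x' → x ⤳ x' → x = x' := by
  obtain ⟨hX, hint⟩ : IsAffine X ∧ RingHom.IsIntegral (f.app ⊤).hom :=
    ⟨isAffine_of_isAffineHom f, f.isIntegral_app ⊤ (isAffineOpen_top Y)⟩
  haveI := hX
  have hnat : X.isoSpec.hom ≫ Spec.map (f.appTop) = f ≫ Y.isoSpec.hom :=
    Scheme.isoSpec_hom_naturality f
  have hf : f = X.isoSpec.hom ≫ Spec.map (f.appTop) ≫ Y.isoSpec.inv := by
    rw [← Category.assoc, hnat, Category.assoc, Iso.hom_inv_id, Category.comp_id]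
  have hcl : IsClosedMap (PrimeSpectrum.comap f.appTop.hom) :=
    PrimeSpectrum.isClosedMap_comap_of_isIntegral _ hint
  have hm : IsClosedMap ⇑((Spec.map (f.appTop)).base) := hcl
  constructor
  · have hbase : ⇑f.base = ⇑Y.isoSpec.inv.base ∘ ⇑((Spec.map (f.appTop)).base) ∘
        ⇑X.isoSpec.hom.base := by
      funext z
      conv_lhs => rw [hf]
      simp [Scheme.Hom.comp_apply]
    rw [hbase]
    exact ((Scheme.homeoOfIso X.isoSpec).isClosedMap.specializingMap.comp
      hm.specializingMap).comp
      (Scheme.homeoOfIso Y.isoSpec.symm).isClosedMap.specializingMap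
  · intro x x' he hsp
    have hnatx : ∀ z : X, PrimeSpectrum.comap f.appTop.hom (X.isoSpec.hom.base z) =
        Y.isoSpec.hom.base (f.base z) := by
      intro z
      have h0 := congrArg (fun g : X ⟶ Spec Γ(Y, ⊤) => g.base z) hnat
      exact h0
    have h1 : X.isoSpec.hom.base x ⤳ X.isoSpec.hom.base x' :=
      hsp.map (X.isoSpec.hom.base).hom.continuous
    have h2 : PrimeSpectrum.comap f.appTop.hom (X.isoSpec.hom.base x) =
        PrimeSpectrum.comap f.appTop.hom (X.isoSpec.hom.base x') := by
      rw [hnatx, hnatx, he]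
    have h3 : X.isoSpec.hom.base x = X.isoSpec.hom.base x' :=
      primeSpectrum_comap_incomp _ hint
        ((PrimeSpectrum.le_iff_specializes _ _).mpr h1) h2
    exact (Scheme.homeoOfIso X.isoSpec).injective h3

lemma integral_facts {X Y : Scheme.{u}} (f : X ⟶ Y) [AlgebraicGeometry.IsIntegralHom f] :
    SpecializingMap f.base ∧ ∀ x x' : X, f.base x = f.base x' → x ⤳ x' → x = x' := by
  have key : ∀ V : Y.Opens, IsAffineOpen V →
      SpecializingMap ((f ∣_ V).base) ∧
      ∀ x x' : (f ⁻¹ᵁ V).toScheme, (f ∣_ V).base x = (f ∣_ V).base x' → x ⤳ x' → x = x' := by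
    intro V hV
    haveI : IsAffine (Scheme.Opens.toScheme V) := hV
    haveI : AlgebraicGeometry.IsIntegralHom (f ∣_ V) :=
      inferInstance
    exact integral_affine_facts (f ∣_ V)
  constructor
  · rw [specializingMap_iff_closure_singleton_subset]
    intro x y hy
    rw [← specializes_iff_mem_closure] at hy
    obtain ⟨U', ⟨V, hV, rfl⟩, hyV, -⟩ :=
      Y.isBasis_affineOpens.exists_subset_of_mem_open (Set.mem_univ y) isOpen_univ
    have hfxV : f.base x ∈ V := V.2.stableUnderGeneralization hy hyV
    obtain ⟨hspecV, -⟩ := key V hV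
    set x1 : (f ⁻¹ᵁ V).toScheme := ⟨x, hfxV⟩ with hx1
    set y1 : Scheme.Opens.toScheme V := ⟨y, hyV⟩ with hy1
    have hval : ∀ z : (f ⁻¹ᵁ V).toScheme, (Scheme.Opens.ι V).base ((f ∣_ V).base z) = f.base z.1 := by
      intro z
      rw [morphismRestrict_base]
      rfl
    have hsp1 : (f ∣_ V).base x1 ⤳ y1 := by
      rw [← ((Scheme.Opens.ι V).isOpenEmbedding.toIsEmbedding.toIsInducing).specializes_iff]
      have e1 : (Scheme.Opens.ι V).base ((f ∣_ V).base x1) = f.base x := hval x1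
      have e2 : (Scheme.Opens.ι V).base y1 = y := rfl
      rw [e1, e2]
      exact hy
    obtain ⟨z, hz1, hz2⟩ := hspecV.closure_singleton_subset x1
      (show y1 ∈ closure {(f ∣_ V).base x1} from by
        rw [← specializes_iff_mem_closure]; exact hsp1)
    refine ⟨z.1, ?_, ?_⟩
    · have hspz : x1 ⤳ z := by rwa [specializes_iff_mem_closure]
      have := hspz.map ((Scheme.Opens.ι (f ⁻¹ᵁ V)).base).hom.continuous
      rw [specializes_iff_mem_closure] at this
      exact this
    · have := congrArg (fun w => ((Scheme.Opens.ι V).base w : Y)) hz2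
      simp only at this
      rw [hval z] at this
      exact this
  · intro x x' he hsp
    obtain ⟨U', ⟨V, hV, rfl⟩, hyV, -⟩ :=
      Y.isBasis_affineOpens.exists_subset_of_mem_open (Set.mem_univ (f.base x)) isOpen_univ
    have hx'V : f.base x' ∈ V := by rw [← he]; exact hyV
    obtain ⟨-, hincV⟩ := key V hV
    set x1 : (f ⁻¹ᵁ V).toScheme := ⟨x, hyV⟩ with hx1
    set x1' : (f ⁻¹ᵁ V).toScheme := ⟨x', hx'V⟩ with hx1'
    have hval : ∀ z : (f ⁻¹ᵁ V).toScheme, (Scheme.Opens.ι V).base ((f ∣_ V).base z) = f.base z.1 := by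
      intro z
      rw [morphismRestrict_base]
      rfl
    have hsp1 : x1 ⤳ x1' := by
      rw [← ((Scheme.Opens.ι (f ⁻¹ᵁ V)).isOpenEmbedding.toIsEmbedding.toIsInducing).specializes_iff]
      exact hsp
    have he1 : (f ∣_ V).base x1 = (f ∣_ V).base x1' := by
      apply (Scheme.Opens.ι V).isOpenEmbedding.injective
      rw [hval x1, hval x1']
      exact he
    have := hincV x1 x1' he1 hsp1
    exact congrArg Subtype.val this

end SchemeAux

/-- An integral morphism between catenary Noetherian schemes of finite
Krull dimension whose source has equicodimensional irreducible components is catenarious. -/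
theorem statement0 (X Y : AlgebraicGeometry.Scheme)
    [AlgebraicGeometry.IsNoetherian X] [AlgebraicGeometry.IsNoetherian Y]
    (hdX : topologicalKrullDim X ≠ ⊤) (hdY : topologicalKrullDim Y ≠ ⊤)
    (hcX : CatenarySpace X) (hcY : CatenarySpace Y)
    (f : X ⟶ Y) [AlgebraicGeometry.IsIntegralHom f]
    -- every irreducible component `C` of `X` is equicodimensional: all minimal
    -- irreducible closed subsets of `C` have the same codimension in `C`
    (hequi : ∀ C : IrreducibleCloseds X, IsMax C →
      ∀ T T' : IrreducibleCloseds X, IsMin T → IsMin T' → T ≤ C → T' ≤ C →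
        icCodim T C = icCodim T' C) :
    Catenarious f.base f.base.hom.continuous := by
  intro T T' hTT'
  obtain ⟨hspec, hinc⟩ := integral_facts f
  have hdX' : Order.krullDim (IrreducibleCloseds X) ≠ ⊤ := hdX
  have h1 := chDim_add_icCodim_le (imageIC_mono f.base.hom.continuous hTT')
  have h2 := chDim_imageIC f.base.hom.continuous hspec hinc T
  have h3 := chDim_imageIC f.base.hom.continuous hspec hinc T'
  have h4 := chDim_le_of_catenary hdX' hcX hequi hTT'
  have hfin : chDim T ≠ ⊤ := chainHeight_ne_top_of_krullDim_ne_top hdX' _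
  rw [h2, h3] at h1
  exact (WithTop.add_le_add_iff_left hfin).mp (h1.trans h4)
end

section
/- Let f : X → Y be a flat morphism of schemes with X locally Noetherian and the underlying space of X catenary. Assume that for every point y ∈ Y and every point x of Z := cl(f⁻¹(y)), the spectrum of the local ring of the reduced induced closed subscheme structure on Z at x is equidimensional (equivalently: the codimension codim(cl({x}), W) is the same for every irreducible component W of Z containing x). Then f is weakly catenarious. -/
open TopologicalSpace

/-! ### Auxiliary lemmas -/

section AuxAlg

open IsLocalRing

universe u

variable {R S : Type u} [CommRing R] [CommRing S]

theorem map_ne_top_of_flat_local [IsLocalRing R] [IsLocalRing S] (φ : R →+* S)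
    [IsLocalHom φ] {I : Ideal R} (hI : I ≠ ⊤) : Ideal.map φ I ≠ ⊤ := by
  intro hc
  have h1 : Ideal.map φ I ≤ maximalIdeal S := by
    rw [Ideal.map_le_iff_le_comap]
    intro r hr
    show ¬ IsUnit (φ r)
    intro hu
    exact hI (Ideal.eq_top_of_isUnit_mem _ hr (isUnit_of_map_unit φ r hu))
  rw [hc] at h1
  exact (maximalIdeal.isMaximal S).ne_top (top_le_iff.mp h1)

set_option maxHeartbeats 1000000 in
theorem mem_of_map_mem_map_of_flat_local [IsLocalRing R] [IsLocalRing S] (φ : R →+* S)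
    (hfl : φ.Flat) [IsLocalHom φ] {I : Ideal R} {s : R}
    (hs : φ s ∈ Ideal.map φ I) : s ∈ I := by
  letI : Algebra R S := φ.toAlgebra
  haveI : Module.Flat R S := hfl
  have halg : ∀ r : R, algebraMap R S r = φ r := fun _ => rfl
  have hs' : φ s ∈ Submodule.span S (⇑φ '' (I : Set R)) := hs
  rw [Submodule.mem_span_set'] at hs'
  obtain ⟨n, t, g, hsum⟩ := hs'
  choose a ha hφa using fun i : Fin n => (g i).2
  set f0 : ULift.{u} (Fin (n+1)) → R := fun i => Fin.cases s (fun j => -(a j)) i.down with hf0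
  set x0 : ULift.{u} (Fin (n+1)) → S := fun i => Fin.cases 1 (fun j => t j) i.down with hx0
  have hrel : ∑ i, f0 i • x0 i = 0 := by
    rw [← (Equiv.ulift (α := Fin (n+1))).symm.sum_comp (fun i => f0 i • x0 i)]
    have h1 : ∀ j : Fin (n+1), f0 (Equiv.ulift.symm j) • x0 (Equiv.ulift.symm j)
        = Fin.cases (φ s) (fun k => -(t k • (g k : S))) j := by
      intro j
      induction j using Fin.cases with
      | zero => simp [hf0, hx0, Algebra.smul_def, halg]
      | succ k =>
        simp only [hf0, hx0]
        show (Fin.cases s (fun j => -(a j)) k.succ : R) • (Fin.cases 1 (fun j => t j) k.succ : S)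
            = _
        rw [Fin.cases_succ, Fin.cases_succ, Fin.cases_succ, Algebra.smul_def, halg, map_neg,
          hφa, smul_eq_mul]
        ring
    rw [Finset.sum_congr rfl (fun j _ => h1 j), Fin.sum_univ_succ]
    simp only [Fin.cases_zero, Fin.cases_succ]
    rw [Finset.sum_neg_distrib, hsum, add_neg_cancel]
  obtain ⟨κ, A, yv, hx, hf⟩ :=
    Module.Flat.isTrivialRelation_of_sum_smul_eq_zero (R := R) (M := S) (f := f0) (x := x0) hrel
  set J : Ideal R := Submodule.colon I (Ideal.span {s}) with hJ
  have hAJ : ∀ j : Fin κ, A (Equiv.ulift.symm 0) j ∈ J := by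
    intro j
    rw [hJ, Ideal.mem_colon_span_singleton]
    have h2 := hf j
    rw [← (Equiv.ulift (α := Fin (n+1))).symm.sum_comp (fun i => f0 i * A i j),
      Fin.sum_univ_succ] at h2
    have e0 : f0 (Equiv.ulift.symm 0) = s := rfl
    have es : ∀ k : Fin n, f0 (Equiv.ulift.symm k.succ) = -(a k) := fun k => rfl
    rw [e0] at h2
    have h3 : s * A (Equiv.ulift.symm 0) j
        = ∑ k : Fin n, a k * A (Equiv.ulift.symm k.succ) j := by
      have h4 := h2
      rw [Finset.sum_congr rfl (fun k _ => by rw [es k, neg_mul]),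
        Finset.sum_neg_distrib] at h4
      linear_combination h4
    rw [mul_comm, h3]
    exact Submodule.sum_mem _ fun k _ => Ideal.mul_mem_right _ _ (ha k)
  have hone : (1 : S) ∈ Ideal.map φ J := by
    have h4 := hx (Equiv.ulift.symm 0)
    have e1 : x0 (Equiv.ulift.symm 0) = 1 := rfl
    rw [e1] at h4
    rw [h4]
    refine Submodule.sum_mem _ fun j _ => ?_
    rw [Algebra.smul_def, halg]
    exact Ideal.mul_mem_right _ _ (Ideal.mem_map_of_mem φ (hAJ j))
  have hJtop : J = ⊤ := by
    by_contra hne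
    exact map_ne_top_of_flat_local φ hne ((Ideal.eq_top_iff_one _).mpr hone)
  have h5 : (1 : R) ∈ J := hJtop ▸ trivial
  rw [hJ, Ideal.mem_colon_span_singleton, one_mul] at h5
  exact h5

theorem comap_surjective_of_flat_local [IsLocalRing R] [IsLocalRing S] (φ : R →+* S)
    (hfl : φ.Flat) [IsLocalHom φ] :
    Function.Surjective (PrimeSpectrum.comap φ) := by
  intro p
  set T : Submonoid S := Submonoid.map φ p.asIdeal.primeCompl with hT
  set L := Localization T with hL
  have hA : Ideal.map (algebraMap S L) (Ideal.map φ p.asIdeal) ≠ ⊤ := by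
    intro hc
    rw [Ideal.eq_top_iff_one, IsLocalization.mem_map_algebraMap_iff T L] at hc
    obtain ⟨⟨v, w⟩, hvw⟩ := hc
    rw [one_mul] at hvw
    obtain ⟨c, hc2⟩ := (IsLocalization.eq_iff_exists T L).mp hvw
    have h1 : (c : S) * w ∈ T := T.mul_mem c.2 w.2
    have h2 : (c : S) * w ∈ Ideal.map φ p.asIdeal := by
      rw [hc2]; exact Ideal.mul_mem_left _ _ v.2
    obtain ⟨r, hr, hrr⟩ := h1
    have h3 : r ∈ p.asIdeal := mem_of_map_mem_map_of_flat_local φ hfl (by rw [hrr]; exact h2)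
    exact hr h3
  obtain ⟨m, hm, hAm⟩ := Ideal.exists_le_maximal _ hA
  haveI := hm.isPrime
  refine ⟨⟨Ideal.comap (algebraMap S L) m, Ideal.IsPrime.comap _⟩, ?_⟩
  apply PrimeSpectrum.ext
  show Ideal.comap φ (Ideal.comap (algebraMap S L) m) = p.asIdeal
  apply le_antisymm
  · intro r hr
    by_contra hrp
    have hunit : IsUnit (algebraMap S L (φ r)) :=
      IsLocalization.map_units L (⟨φ r, ⟨r, hrp, rfl⟩⟩ : T)
    exact hm.ne_top (Ideal.eq_top_of_isUnit_mem _ hr hunit)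
  · intro r hr
    exact hAm (Ideal.mem_map_of_mem _ (Ideal.mem_map_of_mem _ hr))

end AuxAlg

section AuxTopo

variable {α : Type*} [TopologicalSpace α]

lemma irred_of_dense {W D : Set α} (hW : IsIrreducible W) (hD : D ⊆ W)
    (hd : W ⊆ closure D) (hne : D.Nonempty) : IsIrreducible D := by
  refine ⟨hne, ?_⟩
  intro u v hu hv ⟨p, hpD, hpu⟩ ⟨r, hrD, hrv⟩
  obtain ⟨z, hzW, hzuv⟩ := hW.2 u v hu hv ⟨p, hD hpD, hpu⟩ ⟨r, hD hrD, hrv⟩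
  have hz : z ∈ closure D := hd hzW
  obtain ⟨d, hd1, hd2⟩ := mem_closure_iff.mp hz (u ∩ v) (hu.inter hv) hzuv
  exact ⟨d, hd2, hd1⟩

lemma exists_maxIrred {C Z : Set α} (hC : IsIrreducible C) (hCZ : C ⊆ Z) :
    ∃ W, IsIrredComponentOf W Z ∧ C ⊆ W := by
  have hub : ∀ c ⊆ {t : Set α | IsIrreducible t ∧ t ⊆ Z}, IsChain (fun x1 x2 => x1 ⊆ x2) c →
      c.Nonempty → ∃ ub ∈ {t : Set α | IsIrreducible t ∧ t ⊆ Z}, ∀ s ∈ c, s ⊆ ub := by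
    intro c hcS hchain hcne
    obtain ⟨t0, ht0⟩ := hcne
    refine ⟨⋃₀ c, ⟨⟨?_, ?_⟩, ?_⟩, fun s hs => Set.subset_sUnion_of_mem hs⟩
    · obtain ⟨z, hz⟩ := (hcS ht0).1.1
      exact ⟨z, t0, ht0, hz⟩
    · intro u v hu hv ⟨p, hpc, hpu⟩ ⟨r, hrc, hrv⟩
      obtain ⟨t1, ht1c, hpt1⟩ := hpc
      obtain ⟨t2, ht2c, hrt2⟩ := hrc
      rcases hchain.total ht1c ht2c with h12 | h21
      · obtain ⟨z, hz1, hz2⟩ := (hcS ht2c).1.2 u v hu hv ⟨p, h12 hpt1, hpu⟩ ⟨r, hrt2, hrv⟩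
        exact ⟨z, ⟨t2, ht2c, hz1⟩, hz2⟩
      · obtain ⟨z, hz1, hz2⟩ := (hcS ht1c).1.2 u v hu hv ⟨p, hpt1, hpu⟩ ⟨r, h21 hrt2, hrv⟩
        exact ⟨z, ⟨t1, ht1c, hz1⟩, hz2⟩
    · exact Set.sUnion_subset fun s hs => (hcS hs).2
  obtain ⟨W, hCW, hWmax⟩ :=
    zorn_subset_nonempty {t : Set α | IsIrreducible t ∧ t ⊆ Z} hub C ⟨hC, hCZ⟩
  refine ⟨W, ⟨hWmax.1.2, hWmax.1.1, ?_⟩, hCW⟩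
  intro V hV hWV hVZ
  exact Set.Subset.antisymm (hWmax.2 ⟨hV, hVZ⟩ hWV) hWV

lemma IsIrredComponentOf.isClosed {W Z : Set α} (hZ : IsClosed Z)
    (h : IsIrredComponentOf W Z) : IsClosed W := by
  have h1 : closure W = W :=
    h.2.2 (closure W) h.2.1.closure subset_closure (hZ.closure_subset_iff.mpr h.1)
  rw [← h1]; exact isClosed_closure

lemma ic_lt_of {A B : IrreducibleCloseds α} (hsub : (A : Set α) ⊆ B)
    (hne : (A : Set α) ≠ B) : A < B :=
  lt_of_le_of_ne hsub (fun h => hne (congrArg _ h))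

lemma two_le_icCodim {T B D1 D2 : IrreducibleCloseds α}
    (h1 : T < D1) (h12 : D1 < D2) (h2 : D2 ≤ B) : 2 ≤ icCodim T B := by
  have h : ((2 : ℕ) : ℕ∞) ≤ Set.chainHeight {Z : IrreducibleCloseds α | T < Z ∧ Z ≤ B} (· < ·) := by
    have hc : IsChain (· < ·) ({D1, D2} : Set (IrreducibleCloseds α)) := IsChain.pair h12
    have := Set.encard_le_chainHeight_of_isChain {Z : IrreducibleCloseds α | T < Z ∧ Z ≤ B} _ ?_ hc
    · rw [Set.encard_pair h12.ne] at this; exact_mod_cast this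
    intro i hi
    simp only [Set.mem_insert_iff, Set.mem_singleton_iff] at hi
    rcases hi with rfl | rfl
    · exact ⟨h1, h12.le.trans h2⟩
    · exact ⟨h1.trans h12, h2⟩
  exact h

lemma exists_pair_of_not_icCodim_le_one {T B : IrreducibleCloseds α}
    (h : ¬ icCodim T B ≤ 1) : ∃ D1 D2 : IrreducibleCloseds α,
      (T < D1 ∧ D1 ≤ B) ∧ (T < D2 ∧ D2 ≤ B) ∧ D1 < D2 := by
  rw [not_le] at h
  have h2 : ((2 : ℕ) : ℕ∞) ≤ icCodim T B := Order.add_one_le_of_lt h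
  rw [icCodim] at h2
  obtain ⟨t, hts, ht2, htc⟩ := Set.exists_isChain_of_le_chainHeight 2 h2
  obtain ⟨a, b, hab, rfl⟩ := Set.encard_eq_two.mp (by exact_mod_cast ht2)
  have hs : a ∈ ({a, b} : Set (IrreducibleCloseds α)) := by simp
  have hs' : b ∈ ({a, b} : Set (IrreducibleCloseds α)) := by simp
  rcases htc hs hs' hab with h | h
  · exact ⟨a, b, hts hs, hts hs', h⟩
  · exact ⟨b, a, hts hs', hts hs, h⟩

lemma no_middle_of_icCodim_one {T B : IrreducibleCloseds α}
    (h : icCodim T B = 1) : ∀ Z : IrreducibleCloseds α, ¬ (T < Z ∧ Z < B) := by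
  rintro Z ⟨h1, h2⟩
  have := two_le_icCodim h1 h2 le_rfl
  rw [h] at this
  norm_num at this

end AuxTopo

section AuxScheme

open AlgebraicGeometry

lemma exists_generization_lift {X Y : AlgebraicGeometry.Scheme} (f : X ⟶ Y)
    (hflat : SchemeHomFlat f) {x : X} {z : Y} (h : z ⤳ f.base x) :
    ∃ x' : X, f.base x' = z ∧ x' ⤳ x := by
  have hz : z ∈ Set.range (Y.fromSpecStalk (f.base x)).base := by
    rw [Scheme.range_fromSpecStalk]; exact h
  obtain ⟨p, hp⟩ := hz
  have hsurj : Function.Surjective (Spec.map (f.stalkMap x)).base := by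
    show Function.Surjective (PrimeSpectrum.comap (f.stalkMap x).hom)
    exact comap_surjective_of_flat_local _ (hflat x)
  obtain ⟨q, hq⟩ := hsurj p
  refine ⟨(X.fromSpecStalk x).base q, ?_, ?_⟩
  · have hcomm := Scheme.SpecMap_stalkMap_fromSpecStalk (f := f) (x := x)
    have h2 := congrArg (fun g : Spec (X.presheaf.stalk x) ⟶ Y => g.base q) hcomm
    simp only [Scheme.Hom.comp_apply] at h2
    rw [← h2, hq, hp]
  · have h3 : (X.fromSpecStalk x).base q ∈ Set.range (X.fromSpecStalk x).base := ⟨q, rfl⟩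
    rw [Scheme.range_fromSpecStalk] at h3
    exact h3

lemma component_dense_inter {X : AlgebraicGeometry.Scheme} [IsLocallyNoetherian X]
    {S W : Set X} (hW : IsIrredComponentOf W (closure S)) : W ⊆ closure (W ∩ S) := by
  have hWc : IsClosed W := hW.isClosed isClosed_closure
  set η := hW.2.1.genericPoint with hη
  have hηW : closure {η} = W := by
    rw [hW.2.1.genericPoint_closure_eq, hWc.closure_eq]
  have hηmem : η ∈ W := by rw [← hηW]; exact subset_closure rfl
  obtain ⟨_, ⟨U, hU, rfl⟩, hηU, -⟩ :=
    X.isBasis_affineOpens.exists_subset_of_mem_open (Set.mem_univ η) isOpen_univ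
  haveI : IsNoetherianRing Γ(X, U) := IsLocallyNoetherian.component_noetherian ⟨U, hU⟩
  haveI : TopologicalSpace.NoetherianSpace U := noetherianSpace_of_isAffineOpen U hU
  set A : Set X := (closure S ∩ (U : Set X)) \ W with hA
  have key : η ∉ closure A := by
    intro hηA
    set A₀ : Set U := Subtype.val ⁻¹' A with hA₀
    obtain ⟨𝒮, hfin, hclosed, hirr, hdecomp⟩ :=
      TopologicalSpace.NoetherianSpace.exists_finite_set_isClosed_irreducible
        (isClosed_closure (s := A₀) (X := U))
    have hAim : A = Subtype.val '' A₀ := by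
      ext a; constructor
      · intro ha; exact ⟨⟨a, ha.1.2⟩, ha, rfl⟩
      · rintro ⟨b, hb, rfl⟩; exact hb
    have hAsub : A = ⋃ t ∈ 𝒮, Subtype.val '' (A₀ ∩ t) := by
      have h1 : A₀ = ⋃ t ∈ 𝒮, (A₀ ∩ t) := by
        have h2 : A₀ ⊆ ⋃₀ 𝒮 := hdecomp ▸ subset_closure
        ext z; constructor
        · intro hz
          obtain ⟨t, ht, hzt⟩ := h2 hz
          exact Set.mem_biUnion ht ⟨hz, hzt⟩
        · rintro hz
          simp only [Set.mem_iUnion] at hz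
          obtain ⟨t, _, hzt, _⟩ := hz
          exact hzt
      rw [hAim]
      conv_lhs => rw [h1]
      exact Set.image_iUnion₂ _ _
    have hηA' : η ∈ ⋃ t ∈ 𝒮, closure (Subtype.val '' (A₀ ∩ t)) := by
      rw [← Set.Finite.closure_biUnion hfin, ← hAsub]; exact hηA
    simp only [Set.mem_iUnion] at hηA'
    obtain ⟨t₀, ht₀S, hηt₀⟩ := hηA'
    have hne : (Subtype.val '' (A₀ ∩ t₀)).Nonempty := by
      by_contra hemp
      rw [Set.not_nonempty_iff_eq_empty] at hemp
      rw [hemp, closure_empty] at hηt₀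
      exact hηt₀
    set D : Set X := closure (Subtype.val '' t₀) with hD
    have hDirr : IsIrreducible D :=
      ((hirr t₀ ht₀S).image _ continuous_subtype_val.continuousOn).closure
    have hηD : η ∈ D :=
      closure_mono (Set.image_mono Set.inter_subset_right) hηt₀
    have hDZ : D ⊆ closure S := by
      apply isClosed_closure.closure_subset_iff.mpr
      have h1 : (Subtype.val '' t₀ : Set X) ⊆ closure A := by
        rintro _ ⟨z, hzt, rfl⟩
        have h2 : z ∈ closure A₀ := hdecomp ▸ Set.subset_sUnion_of_mem ht₀S hzt
        have h3 : closure A₀ ⊆ Subtype.val ⁻¹' closure A :=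
          closure_minimal (fun w hw => subset_closure hw)
            (isClosed_closure.preimage continuous_subtype_val)
        exact h3 h2
      exact h1.trans (closure_minimal (fun a ha => ha.1.1) isClosed_closure)
    have hWD : W ⊆ D := by
      rw [← hηW]; exact closure_minimal (Set.singleton_subset_iff.mpr hηD) isClosed_closure
    have hDW : D = W := hW.2.2 D hDirr hWD hDZ
    obtain ⟨w, ⟨z, hz, rfl⟩⟩ := hne
    have hwA : (z : X) ∈ A := by rw [hAim]; exact ⟨z, hz.1, rfl⟩
    have hwW : (z : X) ∈ W := by
      rw [← hDW]
      exact subset_closure ⟨z, hz.2, rfl⟩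
    exact hwA.2 hwW
  have hmain : η ∈ closure (W ∩ S) := by
    rw [mem_closure_iff]
    intro o ho hηo
    have hηS : η ∈ closure S := hW.1 hηmem
    have ho' : IsOpen (o ∩ (U : Set X) ∩ (closure A)ᶜ) :=
      (ho.inter U.2).inter isClosed_closure.isOpen_compl
    have hηo' : η ∈ o ∩ (U : Set X) ∩ (closure A)ᶜ := ⟨⟨hηo, hηU⟩, key⟩
    obtain ⟨w, hwo', hwS⟩ := mem_closure_iff.mp hηS _ ho' hηo'
    have hwW : w ∈ W := by
      by_contra hwnW
      have h4 : w ∈ A := ⟨⟨subset_closure hwS, hwo'.1.2⟩, hwnW⟩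
      exact hwo'.2 (subset_closure h4)
    exact ⟨w, hwo'.1.1, hwW, hwS⟩
  intro w hw
  have hfin2 : closure {η} ⊆ closure (W ∩ S) :=
    closure_minimal (Set.singleton_subset_iff.mpr hmain) isClosed_closure
  rw [hηW] at hfin2
  exact hfin2 hw

lemma closure_component_isComponent {X : AlgebraicGeometry.Scheme} [IsLocallyNoetherian X]
    {S T' : Set X} (hT' : IsIrredComponentOf T' S) :
    IsIrredComponentOf (closure T') (closure S) := by
  refine ⟨closure_mono hT'.1, hT'.2.1.closure, ?_⟩
  intro V hV hTV hVZ
  obtain ⟨W, hW, hVW⟩ := exists_maxIrred hV hVZ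
  have hdense := component_dense_inter hW
  have hWne : (W ∩ S).Nonempty := by
    obtain ⟨w, hw⟩ := hW.2.1.1
    have h1 := hdense hw
    rcases Set.eq_empty_or_nonempty (W ∩ S) with h | h
    · rw [h, closure_empty] at h1; exact absurd h1 (Set.notMem_empty w)
    · exact h
  have hirr : IsIrreducible (W ∩ S) :=
    irred_of_dense hW.2.1 Set.inter_subset_left hdense hWne
  have hTW : T' ⊆ W ∩ S :=
    Set.subset_inter ((subset_closure.trans hTV).trans hVW) hT'.1
  have hWS : W ∩ S = T' := hT'.2.2 _ hirr hTW Set.inter_subset_right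
  have hWT : W = closure T' := by
    apply Set.Subset.antisymm
    · rw [← hWS]; exact hdense.trans (closure_mono (by rw [hWS]))
    · exact closure_minimal (hTW.trans Set.inter_subset_left)
        (hW.isClosed isClosed_closure)
  exact Set.Subset.antisymm (hVW.trans hWT.subset) hTV

end AuxScheme

/-- A flat morphism of schemes with locally Noetherian catenary source such
that, for every `y` and every point `x` of `Z = cl(f⁻¹ y)`, the codimension of `cl {x}`
is the same in every irreducible component of `Z` containing `x`
(equidimensionality of the local rings of `Z`), is weakly catenarious. -/
theorem statement4 {X Y : AlgebraicGeometry.Scheme} (f : X ⟶ Y)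
    (hflat : SchemeHomFlat f) [AlgebraicGeometry.IsLocallyNoetherian X]
    (hcat : CatenarySpace X)
    (hequi : ∀ y : Y, ∀ x : X, x ∈ closure (f.base ⁻¹' {y}) →
      ∀ W W' : Set X, ∀ hW : IsIrredComponentOf W (closure (f.base ⁻¹' {y})),
        ∀ hW' : IsIrredComponentOf W' (closure (f.base ⁻¹' {y})), x ∈ W → x ∈ W' →
          icCodim (ptIC x) ⟨closure W, hW.2.1.closure, isClosed_closure⟩ =
            icCodim (ptIC x) ⟨closure W', hW'.2.1.closure, isClosed_closure⟩) :
    WeaklyCatenarious f.base f.base.hom.continuous := by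
  intro y T' hT' T hTsub hcodim
  classical
  have hT'ne : T'.Nonempty := hT'.2.1.1
  have himg : f.base '' T' = {y} := by
    apply (Set.Nonempty.subset_singleton_iff (hT'ne.image _)).mp
    rintro _ ⟨t, ht, rfl⟩
    exact hT'.1 ht
  by_contra hgoal
  obtain ⟨a, b, ⟨haT, haB⟩, ⟨hbT, hbB⟩, hab⟩ := exists_pair_of_not_icCodim_le_one hgoal
  -- generic points
  have hTirr : IsIrreducible (T : Set X) := T.isIrreducible
  set x := hTirr.genericPoint with hx
  have hxT : closure {x} = (T : Set X) := by
    rw [hTirr.genericPoint_closure_eq, T.isClosed.closure_eq]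
  have hxmem : x ∈ (T : Set X) := by rw [← hxT]; exact subset_closure rfl
  have hptT : ptIC x = T := SetLike.coe_injective hxT
  set za := a.isIrreducible.genericPoint with hza'
  have hza : closure {za} = (a : Set Y) := by
    rw [a.isIrreducible.genericPoint_closure_eq, a.isClosed.closure_eq]
  set zb := b.isIrreducible.genericPoint with hzb'
  have hzb : closure {zb} = (b : Set Y) := by
    rw [b.isIrreducible.genericPoint_closure_eq, b.isClosed.closure_eq]
  -- specialization chain in Y
  have hfx_mem : f.base x ∈ (imageIC (⇑f.base) f.base.hom.continuous T : Set Y) :=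
    subset_closure ⟨x, hxmem, rfl⟩
  have hfx_a : f.base x ∈ (a : Set Y) := SetLike.le_def.mp haT.le hfx_mem
  have hspec_a : za ⤳ f.base x := by
    rw [specializes_iff_mem_closure, hza]; exact hfx_a
  have hza_b : za ∈ (b : Set Y) := by
    have h1 : za ∈ (a : Set Y) := by rw [← hza]; exact subset_closure rfl
    exact SetLike.le_def.mp hab.le h1
  have hspec_b : zb ⤳ za := by
    rw [specializes_iff_mem_closure, hzb]; exact hza_b
  have hzb_y : zb ∈ closure ({y} : Set Y) := by
    have h1 : zb ∈ (b : Set Y) := by rw [← hzb]; exact subset_closure rfl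
    have h2 : zb ∈ closure (⇑f.base '' T') := SetLike.le_def.mp hbB h1
    rwa [himg] at h2
  have hspec_y : y ⤳ zb := specializes_iff_mem_closure.mpr hzb_y
  -- lift the chain via flatness
  obtain ⟨x₁, hfx₁, hx₁x⟩ := exists_generization_lift f hflat hspec_a
  obtain ⟨x₂, hfx₂, hx₂x₁⟩ := exists_generization_lift f hflat (z := zb) (x := x₁) (by rw [hfx₁]; exact hspec_b)
  obtain ⟨x₃, hfx₃, hx₃x₂⟩ := exists_generization_lift f hflat (z := y) (x := x₂) (by rw [hfx₂]; exact hspec_y)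
  have hcl1 : closure ({x} : Set X) ⊆ closure {x₁} := specializes_iff_closure_subset.mp hx₁x
  have hcl2 : closure ({x₁} : Set X) ⊆ closure {x₂} := specializes_iff_closure_subset.mp hx₂x₁
  have hcl3 : closure ({x₂} : Set X) ⊆ closure {x₃} := specializes_iff_closure_subset.mp hx₃x₂
  have hne1 : closure ({x} : Set X) ≠ closure {x₁} := by
    intro he
    have hsp : x ⤳ x₁ := specializes_iff_mem_closure.mpr (he ▸ subset_closure rfl)
    have hsp2 : f.base x ⤳ za := by rw [← hfx₁]; exact hsp.map f.base.hom.continuous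
    have hmem : za ∈ (imageIC (⇑f.base) f.base.hom.continuous T : Set Y) := by
      have h1 : za ∈ closure {f.base x} := specializes_iff_mem_closure.mp hsp2
      have h2 : closure ({f.base x} : Set Y) ⊆ closure (f.base '' (T : Set X)) :=
        closure_mono (Set.singleton_subset_iff.mpr ⟨x, hxmem, rfl⟩)
      exact h2 h1
    have hle : a ≤ imageIC (⇑f.base) f.base.hom.continuous T := by
      show (a : Set Y) ⊆ _
      rw [← hza]
      exact closure_minimal (Set.singleton_subset_iff.mpr hmem) isClosed_closure
    exact haT.not_ge hle
  have hne2 : closure ({x₁} : Set X) ≠ closure {x₂} := by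
    intro he
    have hsp : x₁ ⤳ x₂ := specializes_iff_mem_closure.mpr (he ▸ subset_closure rfl)
    have hsp2 : za ⤳ zb := by rw [← hfx₁, ← hfx₂]; exact hsp.map f.base.hom.continuous
    have hle : b ≤ a := by
      show (b : Set Y) ⊆ (a : Set Y)
      rw [← hza, ← hzb]
      exact specializes_iff_closure_subset.mp hsp2
    exact hab.not_ge hle
  -- components of the closed fiber
  have hZT' : IsIrredComponentOf (closure T') (closure (f.base ⁻¹' {y})) :=
    closure_component_isComponent hT'
  have hx₃S : x₃ ∈ f.base ⁻¹' {y} := by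
    show f.base x₃ ∈ ({y} : Set Y)
    rw [Set.mem_singleton_iff]
    exact hfx₃
  have hclx₃ : closure ({x₃} : Set X) ⊆ closure (f.base ⁻¹' {y}) :=
    closure_mono (Set.singleton_subset_iff.mpr hx₃S)
  obtain ⟨W', hW', hx₃W'⟩ :=
    exists_maxIrred ((isIrreducible_singleton (x := x₃)).closure) hclx₃
  have hxT' : x ∈ closure T' := hTsub hxmem
  have hxZ : x ∈ closure (f.base ⁻¹' {y}) := hZT'.1 hxT'
  have hxW' : x ∈ W' := hx₃W' (hcl3 (hcl2 (hcl1 (subset_closure rfl))))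
  -- apply the equidimensionality hypothesis
  have heq := hequi y x hxZ (closure T') W' hZT' hW' hxT' hxW'
  have e2 : (⟨closure (closure T'), hZT'.2.1.closure, isClosed_closure⟩ :
      IrreducibleCloseds X) = ⟨closure T', hT'.2.1.closure, isClosed_closure⟩ :=
    SetLike.coe_injective closure_closure
  rw [hptT, e2, hcodim] at heq
  -- build a chain of length 2 inside W'
  have hlt1 : T < ptIC x₁ := by
    rw [← hptT]
    exact ic_lt_of hcl1 hne1
  have hlt2 : ptIC x₁ < ptIC x₂ := ic_lt_of hcl2 hne2
  have hle3 : ptIC x₂ ≤ (⟨closure W', hW'.2.1.closure, isClosed_closure⟩ :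
      IrreducibleCloseds X) := by
    show closure ({x₂} : Set X) ⊆ closure W'
    exact (hcl3.trans hx₃W').trans subset_closure
  have h2le := two_le_icCodim hlt1 hlt2 hle3
  rw [← heq] at h2le
  norm_num at h2le
end

section
/- Let X and Y be Noetherian schemes of finite Krull dimension whose underlying spaces are catenary, and let f : X → Y be a flat morphism such that for every point y ∈ Y the fiber X_y = f⁻¹(y) is irreducible. Then f is weakly catenarious. -/
open TopologicalSpace

open TensorProduct in
theorem flat_local_comap_surj {R S : Type u} [CommRing R] [CommRing S] [IsLocalRing R]
    [IsLocalRing S] (φ : R →+* S) (hφ : φ.Flat) [hl : IsLocalHom φ] (q : Ideal R) [q.IsPrime] :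
    ∃ p : Ideal S, p.IsPrime ∧ p.comap φ = q := by
  letI : Algebra R S := φ.toAlgebra
  haveI : Module.Flat R S := hφ
  haveI ff : Module.FaithfullyFlat R S := by
    refine { toFlat := inferInstance, submodule_ne_top := ?_ }
    intro m hm heq
    rw [IsLocalRing.eq_maximalIdeal hm] at heq
    have hle : (IsLocalRing.maximalIdeal R) • (⊤ : Submodule R S) ≤
        (IsLocalRing.maximalIdeal S).restrictScalars R := by
      refine Submodule.smul_le.2 fun r hr s _ => ?_
      have h1 : φ r ∈ IsLocalRing.maximalIdeal S := fun hu => hr (hl.map_nonunit r hu)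
      show r • s ∈ IsLocalRing.maximalIdeal S
      have h2 : r • s = φ r * s := rfl
      rw [h2]
      exact Ideal.mul_mem_right s _ h1
    rw [heq] at hle
    have : (1 : S) ∈ IsLocalRing.maximalIdeal S := hle trivial
    exact this isUnit_one
  haveI : Nontrivial (S ⊗[R] (FractionRing (R ⧸ q))) := Module.FaithfullyFlat.lTensor_nontrivial R S (FractionRing (R ⧸ q))
  obtain ⟨P'⟩ : Nonempty (PrimeSpectrum (S ⊗[R] (FractionRing (R ⧸ q)))) := inferInstance
  obtain ⟨p', hp'⟩ := P'
  haveI : p'.IsPrime := hp'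
  refine ⟨p'.comap (Algebra.TensorProduct.includeLeftRingHom : S →+* S ⊗[R] (FractionRing (R ⧸ q))),
    Ideal.comap_isPrime _ _, ?_⟩
  have hcomm : (Algebra.TensorProduct.includeLeftRingHom : S →+* S ⊗[R] (FractionRing (R ⧸ q))).comp φ =
      (Algebra.TensorProduct.includeRight.toRingHom : (FractionRing (R ⧸ q)) →+* S ⊗[R] (FractionRing (R ⧸ q))).comp (algebraMap R (FractionRing (R ⧸ q))) := by
    ext r
    show φ r ⊗ₜ[R] (1 : (FractionRing (R ⧸ q))) = (1 : S) ⊗ₜ[R] (algebraMap R (FractionRing (R ⧸ q)) r)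
    rw [show φ r = algebraMap R S r from rfl, Algebra.algebraMap_eq_smul_one,
      Algebra.algebraMap_eq_smul_one, TensorProduct.smul_tmul]
  rw [Ideal.comap_comap, hcomm, ← Ideal.comap_comap]
  have hbot : p'.comap (Algebra.TensorProduct.includeRight.toRingHom : (FractionRing (R ⧸ q)) →+* S ⊗[R] (FractionRing (R ⧸ q))) = ⊥ := by
    haveI : (p'.comap (Algebra.TensorProduct.includeRight.toRingHom : (FractionRing (R ⧸ q)) →+* S ⊗[R] (FractionRing (R ⧸ q)))).IsPrime :=
      Ideal.comap_isPrime _ _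
    exact (Ideal.eq_bot_or_top _).resolve_right (this.ne_top)
  rw [hbot]
  ext x
  simp only [Ideal.mem_comap, Ideal.mem_bot]
  rw [IsScalarTower.algebraMap_apply R (R ⧸ q) (FractionRing (R ⧸ q))]
  rw [map_eq_zero_iff _ (IsFractionRing.injective (R ⧸ q) (FractionRing (R ⧸ q)))]
  exact Ideal.Quotient.eq_zero_iff_mem

theorem key_top {α β : Type*} [TopologicalSpace α] [TopologicalSpace β]
    [QuasiSober α] [QuasiSober β] (f : α → β) (hf : Continuous f)
    (hlift : ∀ x z, f x ∈ closure {z} → ∃ x', f x' = z ∧ x ∈ closure {x'})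
    (y : β) (T' : Set α) (hT' : IsIrreducible T') (hfib : T' = f ⁻¹' {y})
    (T : IrreducibleCloseds α) (hsub : (T : Set α) ⊆ closure T')
    (hcodim : icCodim T ⟨closure T', hT'.closure, isClosed_closure⟩ = 1) :
    icCodim (imageIC f hf T)
      ⟨closure (f '' T'), (hT'.image f hf.continuousOn).closure, isClosed_closure⟩ ≤ 1 := by
  by_contra hgt
  push_neg at hgt
  -- extract a 2-chain in the image set
  have h2 : (2 : ℕ∞) ≤ icCodim (imageIC f hf T)
      ⟨closure (f '' T'), (hT'.image f hf.continuousOn).closure, isClosed_closure⟩ := by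
    have := Order.add_one_le_of_lt hgt
    rw [one_add_one_eq_two] at this; exact this
  obtain ⟨Z₁, Z₂, h12, hZ₁, hZ₂⟩ : ∃ Z₁ Z₂ : IrreducibleCloseds β, Z₁ < Z₂ ∧
      (imageIC f hf T < Z₁ ∧ Z₁ ≤
        ⟨closure (f '' T'), (hT'.image f hf.continuousOn).closure, isClosed_closure⟩) ∧
      (imageIC f hf T < Z₂ ∧ Z₂ ≤
        ⟨closure (f '' T'), (hT'.image f hf.continuousOn).closure, isClosed_closure⟩) := by
    rw [icCodim] at h2
    obtain ⟨t, hts, hte, htc⟩ := Set.exists_isChain_of_le_chainHeight 2 (by exact_mod_cast h2)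
    obtain ⟨a, b, hab, rfl⟩ := Set.encard_eq_two.1 hte
    rcases htc (by simp) (by simp) hab with h | h
    · exact ⟨a, b, h, hts (by simp), hts (by simp)⟩
    · exact ⟨b, a, h, hts (by simp), hts (by simp)⟩
  -- generic points
  obtain ⟨t, ht⟩ := QuasiSober.sober T.isIrreducible T.isClosed
  obtain ⟨z₁, hz₁⟩ := QuasiSober.sober Z₁.isIrreducible Z₁.isClosed
  obtain ⟨z₂, hz₂⟩ := QuasiSober.sober Z₂.isIrreducible Z₂.isClosed
  have htT : t ∈ (T : Set α) := by
    rw [← ht]; exact subset_closure rfl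
  have hftImg : f t ∈ closure (f '' (T : Set α)) := subset_closure ⟨t, htT, rfl⟩
  -- z₁ ∉ closure (f '' T)
  have hz₁not : z₁ ∉ closure (f '' (T : Set α)) := by
    intro hc
    have hle : Z₂ ≤ Z₁ → False := fun h => absurd h (not_le_of_gt h12)
    have : (Z₁ : Set β) ⊆ closure (f '' (T : Set α)) := by
      rw [← hz₁]
      exact closure_minimal (Set.singleton_subset_iff.2 hc) isClosed_closure
    exact absurd ((lt_iff_le_and_ne.1 hZ₁.1).2 (le_antisymm (le_of_lt hZ₁.1)
      (by exact this))) (by simp)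
  -- memberships of generic points
  have hft1 : f t ∈ closure {z₁} := by
    rw [hz₁]; exact hZ₁.1.le hftImg
  have hz1in : z₁ ∈ (Z₁ : Set β) := by rw [← hz₁]; exact subset_closure rfl
  have hz12 : z₁ ∈ closure {z₂} := by rw [hz₂]; exact h12.le hz1in
  have hz2in : z₂ ∈ (Z₂ : Set β) := by rw [← hz₂]; exact subset_closure rfl
  have himgy : f '' T' ⊆ {y} := by
    rintro _ ⟨a, ha, rfl⟩
    rw [hfib] at ha
    exact ha
  have hz2y : z₂ ∈ closure {y} := by
    have : (Z₂ : Set β) ⊆ closure {y} :=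
      le_trans hZ₂.2 (closure_mono himgy)
    exact this hz2in
  have hz2notZ1 : z₂ ∉ (Z₁ : Set β) := by
    intro hc
    have hle : Z₂ ≤ Z₁ := by
      show (Z₂ : Set β) ⊆ (Z₁ : Set β)
      rw [← hz₂]
      exact closure_minimal (Set.singleton_subset_iff.2 hc) Z₁.isClosed
    exact not_le_of_gt h12 hle
  -- lifts
  obtain ⟨t₁, hft₁, ht1⟩ := hlift t z₁ hft1
  obtain ⟨t₂, hft₂, ht2⟩ := hlift t₁ z₂ (by rw [hft₁]; exact hz12)
  obtain ⟨t₃, hft₃, ht3⟩ := hlift t₂ y (by rw [hft₂]; exact hz2y)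
  -- chain in α
  let W₁ : IrreducibleCloseds α := ⟨closure {t₁}, isIrreducible_singleton.closure,
    isClosed_closure⟩
  let W₂ : IrreducibleCloseds α := ⟨closure {t₂}, isIrreducible_singleton.closure,
    isClosed_closure⟩
  have hTW1 : T < W₁ := by
    refine lt_of_le_of_ne ?_ ?_
    · show (T : Set α) ⊆ closure {t₁}
      rw [← ht]
      exact closure_minimal (Set.singleton_subset_iff.2 ht1) isClosed_closure
    · intro hTeq
      have : t₁ ∈ (T : Set α) := by
        rw [hTeq]; exact subset_closure rfl
      exact hz₁not (by rw [← hft₁]; exact subset_closure ⟨t₁, this, rfl⟩)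
  have hW12 : W₁ < W₂ := by
    refine lt_of_le_of_ne ?_ ?_
    · show (closure {t₁} : Set α) ⊆ closure {t₂}
      exact closure_minimal (Set.singleton_subset_iff.2 ht2) isClosed_closure
    · intro hWeq
      have ht21 : t₂ ∈ (closure {t₁} : Set α) := by
        have : t₂ ∈ (W₂ : Set α) := subset_closure rfl
        rw [← hWeq] at this
        exact this
      have : f t₂ ∈ closure {f t₁} := by
        have h1 : f t₂ ∈ f '' closure {t₁} := ⟨t₂, ht21, rfl⟩
        have h2 : f '' closure ({t₁} : Set α) ⊆ closure (f '' {t₁}) :=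
          image_closure_subset_closure_image hf
        simpa using h2 h1
      rw [hft₂, hft₁] at this
      exact hz2notZ1 (hz₁ ▸ this)
  have hW2T' : W₂ ≤ (⟨closure T', hT'.closure, isClosed_closure⟩ : IrreducibleCloseds α) := by
    show (closure {t₂} : Set α) ⊆ closure T'
    have ht3T' : t₃ ∈ T' := by rw [hfib]; exact hft₃
    have h23 : closure ({t₂} : Set α) ⊆ closure {t₃} :=
      closure_minimal (Set.singleton_subset_iff.2 ht3) isClosed_closure
    exact h23.trans (closure_mono (Set.singleton_subset_iff.2 ht3T'))
  have hfin : (2 : ℕ∞) ≤ icCodim T ⟨closure T', hT'.closure, isClosed_closure⟩ := by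
    rw [icCodim]
    refine le_trans (Set.encard_pair hW12.ne).symm.le
      (Set.encard_le_chainHeight_of_isChain _ _ ?_ (IsChain.pair hW12))
    · intro Z hZ
      simp only [Set.mem_insert_iff, Set.mem_singleton_iff] at hZ
      rcases hZ with rfl | rfl
      · exact ⟨hTW1, le_trans hW12.le hW2T'⟩
      · exact ⟨lt_trans hTW1 hW12, hW2T'⟩
  rw [hcodim] at hfin
  exact absurd hfin (by norm_num)

open AlgebraicGeometry CategoryTheory in
theorem lift_spec {X Y : AlgebraicGeometry.Scheme} (f : X ⟶ Y) (hflat : SchemeHomFlat f)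
    (x : X) (z : Y) (hz : f.base x ∈ closure {z}) :
    ∃ x' : X, f.base x' = z ∧ x ∈ closure {x'} := by
  have hz' : z ⤳ f.base x := specializes_iff_mem_closure.2 hz
  have : z ∈ Set.range (Y.fromSpecStalk (f.base x)).base := by
    rw [Scheme.range_fromSpecStalk]; exact hz'
  obtain ⟨q, hq⟩ := this
  haveI : q.asIdeal.IsPrime := q.isPrime
  obtain ⟨p, hp, hpq⟩ := flat_local_comap_surj (f.stalkMap x).hom (hflat x) q.asIdeal
  let P : PrimeSpectrum _ := ⟨p, hp⟩
  refine ⟨(X.fromSpecStalk x).base P, ?_, ?_⟩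
  · have h1 : (X.fromSpecStalk x ≫ f).base P =
        (Spec.map (f.stalkMap x) ≫ Y.fromSpecStalk (f.base x)).base P := by
      rw [Scheme.SpecMap_stalkMap_fromSpecStalk]
    have h2 : (Spec.map (f.stalkMap x)).base P = q := by
      show (PrimeSpectrum.comap (f.stalkMap x).hom) P = q
      exact PrimeSpectrum.ext hpq
    calc f.base ((X.fromSpecStalk x).base P)
        = (X.fromSpecStalk x ≫ f).base P := rfl
      _ = (Y.fromSpecStalk (f.base x)).base ((Spec.map (f.stalkMap x)).base P) := h1
      _ = (Y.fromSpecStalk (f.base x)).base q := by rw [h2]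
      _ = z := hq
  · have : (X.fromSpecStalk x).base P ∈ Set.range (X.fromSpecStalk x).base := ⟨P, rfl⟩
    rw [Scheme.range_fromSpecStalk] at this
    exact specializes_iff_mem_closure.1 this

/-- A flat morphism between catenary Noetherian schemes of finite Krull
dimension all of whose fibers are irreducible is weakly catenarious. -/
theorem statement6 {X Y : AlgebraicGeometry.Scheme} (f : X ⟶ Y)
    [AlgebraicGeometry.IsNoetherian X] [AlgebraicGeometry.IsNoetherian Y]
    (hdX : topologicalKrullDim X ≠ ⊤) (hdY : topologicalKrullDim Y ≠ ⊤)
    (hcX : CatenarySpace X) (hcY : CatenarySpace Y)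
    (hflat : SchemeHomFlat f)
    (hirr : ∀ y : Y, IsIrreducible (f.base ⁻¹' {y})) :
    WeaklyCatenarious f.base f.base.hom.continuous := by
  intro y T' h T hTsub hcodim
  have hfib : T' = f.base ⁻¹' {y} := (h.2.2 _ (hirr y) h.1 le_rfl).symm
  exact key_top f.base f.base.hom.continuous (lift_spec f hflat) y T' h.2.1 hfib T hTsub hcodim
end

section
/- Let (R, m_R) and (S, m_S) be Noetherian local rings, both of Krull dimension 2. Assume Spec(R) is irreducible (R has a unique minimal prime) and Spec(S) is equidimensional (all minimal primes of S have coheight 2). Let φ : R → S be a flat local ring homomorphism (so the induced map f : Spec(S) → Spec(R) satisfies f⁻¹(m_R) = m_S). Then f is weakly catenarious. -/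
open TopologicalSpace

open TensorProduct in
lemma flat_mul_mem_map {R S : Type*} [CommRing R] [CommRing S] (φ : R →+* S)
    (hflat : φ.Flat) (p : Ideal R) (hp : p.IsPrime) (a : R) (ha : a ∉ p) (s : S)
    (h : φ a * s ∈ p.map φ) : s ∈ p.map φ := by
  letI := φ.toAlgebra
  haveI : Module.Flat R S := hflat
  have halg : algebraMap R S = φ := rfl
  have hle : p ≤ Submodule.comap (a • (LinearMap.id (M := R))) p := by
    intro r hr
    simp only [Submodule.mem_comap, LinearMap.smul_apply, LinearMap.id_coe, id_eq, smul_eq_mul]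
    exact Ideal.mul_mem_left p a hr
  set g : (R ⧸ p) →ₗ[R] (R ⧸ p) := Submodule.mapQ p p (a • LinearMap.id) hle with hgdef
  have hg : Function.Injective g := by
    rw [← LinearMap.ker_eq_bot, eq_bot_iff]
    rintro z hz
    obtain ⟨r, rfl⟩ := Ideal.Quotient.mk_surjective z
    rw [LinearMap.mem_ker, hgdef] at hz
    have hz' : Ideal.Quotient.mk p (a * r) = 0 := by
      rw [← hz]
      erw [Submodule.mapQ_apply]
      simp
    rw [Ideal.Quotient.eq_zero_iff_mem] at hz'
    have : r ∈ p := ((hp.mul_mem_iff_mem_or_mem.mp hz').resolve_left ha)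
    simpa [Submodule.mem_bot, Ideal.Quotient.eq_zero_iff_mem] using this
  have hinj : Function.Injective (g.lTensor S) :=
    Module.Flat.lTensor_preserves_injective_linearMap g hg
  let e := TensorProduct.tensorQuotEquivQuotSMul S p
  have mem1 : φ a * s ∈ p • (⊤ : Submodule R S) := by
    rw [Ideal.smul_top_eq_map, halg]
    exact h
  have hcomp : (g.lTensor S) (s ⊗ₜ[R] Ideal.Quotient.mk p 1) = s ⊗ₜ[R] Ideal.Quotient.mk p a := by
    rw [LinearMap.lTensor_tmul, hgdef]
    erw [Submodule.mapQ_apply]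
    simp
  have h0 : (g.lTensor S) (s ⊗ₜ[R] Ideal.Quotient.mk p 1) = 0 := by
    rw [hcomp]
    apply e.injective
    rw [map_zero]
    show TensorProduct.tensorQuotEquivQuotSMul S p (s ⊗ₜ[R] Ideal.Quotient.mk p a) = 0
    rw [TensorProduct.tensorQuotEquivQuotSMul_tmul_mk]
    rw [Submodule.Quotient.mk_eq_zero, show a • s = φ a * s from Algebra.smul_def a s]
    exact mem1
  have hu : (s ⊗ₜ[R] (Ideal.Quotient.mk p 1 : R ⧸ p)) = 0 := hinj (by rw [h0, map_zero])
  have he : (e (s ⊗ₜ[R] Ideal.Quotient.mk p 1)) = 0 := by rw [hu, map_zero]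
  rw [show e (s ⊗ₜ[R] Ideal.Quotient.mk p 1) =
    TensorProduct.tensorQuotEquivQuotSMul S p (s ⊗ₜ[R] Ideal.Quotient.mk p 1) from rfl] at he
  rw [TensorProduct.tensorQuotEquivQuotSMul_tmul_mk, one_smul, Submodule.Quotient.mk_eq_zero,
    Ideal.smul_top_eq_map, halg] at he
  exact he

lemma flat_going_down {R S : Type*} [CommRing R] [CommRing S] (φ : R →+* S)
    (hflat : φ.Flat) (q : Ideal S) (hq : q.IsPrime) (p : Ideal R) (hp : p.IsPrime)
    (hle : p ≤ q.comap φ) :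
    ∃ q' : Ideal S, q'.IsPrime ∧ q' ≤ q ∧ q'.comap φ = p := by
  have hmaple : p.map φ ≤ q := Ideal.map_le_iff_le_comap.mpr hle
  obtain ⟨q', hq'min, hq'q⟩ := Ideal.exists_minimalPrimes_le hmaple
  haveI hq'p : q'.IsPrime := hq'min.1.1
  refine ⟨q', hq'p, hq'q, le_antisymm ?_ (Ideal.map_le_iff_le_comap.mp hq'min.1.2)⟩
  intro x hx
  by_contra hxp
  set I := p.map φ with hI
  obtain ⟨J, hJmin, hJcom⟩ : ∃ J ∈ minimalPrimes (S ⧸ I), J.comap (Ideal.Quotient.mk I) = q' := by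
    have h2 : q' ∈ I.minimalPrimes := hq'min
    rw [Ideal.minimalPrimes_eq_comap] at h2
    obtain ⟨J, hJ, hJ'⟩ := h2
    exact ⟨J, hJ, hJ'⟩
  haveI hJp : J.IsPrime := hJmin.1.1
  have hφx : (Ideal.Quotient.mk I (φ x)) ∈ J := by
    rw [← hJcom] at hx
    exact hx
  have hnil : IsNilpotent (algebraMap (S ⧸ I) (Localization J.primeCompl)
      (Ideal.Quotient.mk I (φ x))) := by
    haveI : Ring.KrullDimLE 0 (Localization.AtPrime J) := .of_isLocalization _ hJmin _
    rw [Ring.KrullDimLE.isNilpotent_iff_mem_maximalIdeal]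
    exact (IsLocalization.AtPrime.to_map_mem_maximal_iff _ J _).mpr hφx
  obtain ⟨n, hn⟩ := hnil
  rw [← map_pow] at hn
  obtain ⟨m, hm⟩ := (IsLocalization.map_eq_zero_iff J.primeCompl _ _).mp hn
  obtain ⟨t, ht⟩ := Ideal.Quotient.mk_surjective (m : S ⧸ I)
  have htq' : t ∉ q' := by
    intro htq
    apply m.2
    rw [← hJcom, Ideal.mem_comap, ht] at htq
    exact htq
  have htI : φ (x ^ n) * t ∈ I := by
    have h3 : (Ideal.Quotient.mk I) (t * φ x ^ n) = 0 := by
      rw [map_mul, ht, map_pow]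
      exact hm
    rw [Ideal.Quotient.eq_zero_iff_mem] at h3
    rwa [map_pow, mul_comm]
  have hxn : x ^ n ∉ p := fun hc => hxp (hp.mem_of_pow_mem n hc)
  have := flat_mul_mem_map φ hflat p hp (x ^ n) hxn t htI
  exact htq' (hq'min.1.2 this)

section Helpers

variable {R : Type*} [CommRing R]

lemma ic_le_iff {A B : IrreducibleCloseds (PrimeSpectrum R)} {a b : PrimeSpectrum R}
    (hA : closure {a} = (A : Set (PrimeSpectrum R)))
    (hB : closure {b} = (B : Set (PrimeSpectrum R))) :
    A ≤ B ↔ b ≤ a := by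
  rw [← SetLike.coe_subset_coe, ← hA, ← hB, ← specializes_iff_closure_subset,
    ← PrimeSpectrum.le_iff_specializes]

lemma ic_lt_iff {A B : IrreducibleCloseds (PrimeSpectrum R)} {a b : PrimeSpectrum R}
    (hA : closure {a} = (A : Set (PrimeSpectrum R)))
    (hB : closure {b} = (B : Set (PrimeSpectrum R))) :
    A < B ↔ b < a := by
  rw [lt_iff_le_not_ge, lt_iff_le_not_ge, ic_le_iff hA hB, ic_le_iff hB hA]

end Helpers

/-- Let `R`, `S` be Noetherian local rings of Krull dimension `2` with
`Spec R` irreducible and `Spec S` equidimensional (every minimal prime has coheight `2`).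
Then the map `Spec S → Spec R` induced by a flat local homomorphism `R → S` is weakly
catenarious. -/
theorem statement7 (R S : Type*) [CommRing R] [CommRing S]
    [IsLocalRing R] [IsLocalRing S] [IsNoetherianRing R] [IsNoetherianRing S]
    (hdR : ringKrullDim R = 2) (hdS : ringKrullDim S = 2)
    [IrreducibleSpace (PrimeSpectrum R)]
    (hequi : ∀ p ∈ minimalPrimes S, ∀ hp : p.IsPrime,
      Order.coheight (⟨p, hp⟩ : PrimeSpectrum S) = 2)
    (φ : R →+* S) (hloc : IsLocalHom φ) (hflat : φ.Flat) :
    WeaklyCatenarious (PrimeSpectrum.comap φ) (PrimeSpectrum.continuous_comap φ) := by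
  classical
  intro y T' hcomp T hTsub hcodim
  set f : PrimeSpectrum S → PrimeSpectrum R := (PrimeSpectrum.comap φ) with hfdef
  have cont : Continuous f := PrimeSpectrum.continuous_comap φ
  by_contra hcon
  push_neg at hcon
  have h2 : (2 : ℕ∞) ≤ icCodim (imageIC f cont T)
      ⟨closure (f '' T'), (hcomp.2.1.image f cont.continuousOn).closure, isClosed_closure⟩ := by
    rw [← one_add_one_eq_two]
    exact (ENat.add_one_le_iff (by simp)).mpr hcon
  obtain ⟨Z₁, Z₂, hZ12, hZ₁mem, hZ₂mem⟩ : ∃ Z₁ Z₂ : IrreducibleCloseds (PrimeSpectrum R), Z₁ < Z₂ ∧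
      (imageIC f cont T < Z₁ ∧ Z₁ ≤ ⟨closure (f '' T'),
        (hcomp.2.1.image f cont.continuousOn).closure, isClosed_closure⟩) ∧
      (imageIC f cont T < Z₂ ∧ Z₂ ≤ ⟨closure (f '' T'),
        (hcomp.2.1.image f cont.continuousOn).closure, isClosed_closure⟩) := by
    obtain ⟨t, hts, htc, htch⟩ := Set.exists_isChain_of_le_chainHeight (r := (· < ·))
      (s := {Z : IrreducibleCloseds (PrimeSpectrum R) | imageIC f cont T < Z ∧ Z ≤ ⟨closure (f '' T'),
        (hcomp.2.1.image f cont.continuousOn).closure, isClosed_closure⟩}) 2 (by exact_mod_cast h2)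
    obtain ⟨u, v, huv, rfl⟩ := Set.encard_eq_two.mp htc
    have hu := hts (Set.mem_insert u {v})
    have hv := hts (Set.mem_insert_of_mem u (Set.mem_singleton v))
    rcases htch (Set.mem_insert u {v}) (Set.mem_insert_of_mem u (Set.mem_singleton v)) huv with h | h
    · exact ⟨u, v, h, hu, hv⟩
    · exact ⟨v, u, h, hv, hu⟩
  -- generic points
  obtain ⟨xT, hxT⟩ := QuasiSober.sober T.isIrreducible T.isClosed
  obtain ⟨z₁, hz₁⟩ := QuasiSober.sober Z₁.isIrreducible Z₁.isClosed
  obtain ⟨z₂, hz₂⟩ := QuasiSober.sober Z₂.isIrreducible Z₂.isClosed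
  obtain ⟨ξ, hξ⟩ := QuasiSober.sober hcomp.2.1.closure isClosed_closure
  -- carriers
  have himT : closure {f xT} = ((imageIC f cont T) : Set (PrimeSpectrum R)) := by
    show closure {f xT} = closure (f '' (T : Set (PrimeSpectrum S)))
    rw [show ((T : Set (PrimeSpectrum S))) = closure {xT} from hxT.symm,
      closure_image_closure cont, Set.image_singleton]
  have hTy : f '' T' = {y} := by
    apply Set.Subset.antisymm
    · exact Set.image_subset_iff.mpr hcomp.1
    · obtain ⟨t, ht⟩ := hcomp.2.1.1
      intro z hz
      rcases hz with rfl
      exact ⟨t, ht, hcomp.1 ht⟩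
  have htgt : closure {y} =
      ((⟨closure (f '' T'), (hcomp.2.1.image f cont.continuousOn).closure, isClosed_closure⟩ :
        IrreducibleCloseds (PrimeSpectrum R)) : Set (PrimeSpectrum R)) := by
    show closure {y} = closure (f '' T')
    rw [hTy]
  -- ideal chain in R
  have hlt1 : z₁ < f xT := (ic_lt_iff himT hz₁).mp hZ₁mem.1
  have hlt2 : z₂ < z₁ := (ic_lt_iff hz₁ hz₂).mp hZ12
  have hyz₂ : y ≤ z₂ := (ic_le_iff hz₂ htgt).mp hZ₂mem.2
  -- generic point of R
  obtain ⟨η, hηcl⟩ := QuasiSober.sober (IrreducibleSpace.isIrreducible_univ (PrimeSpectrum R))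
    isClosed_univ
  have hmin : ∀ x : PrimeSpectrum R, η ≤ x := fun x => by
    rw [PrimeSpectrum.le_iff_specializes, specializes_iff_mem_closure, hηcl]
    trivial
  have hkrull : ∀ p : LTSeries (PrimeSpectrum R), p.length ≤ 2 := fun p => by
    have := Order.LTSeries.length_le_krullDim p
    rw [show Order.krullDim (PrimeSpectrum R) = ringKrullDim R from rfl, hdR] at this
    exact_mod_cast this
  have hz₂η : z₂ = η := by
    by_contra hne
    have hlt : η < z₂ := lt_of_le_of_ne (hmin z₂) (Ne.symm hne)
    have hchain : List.IsChain (· < ·) [η, z₂, z₁, f xT] := by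
      simp [hlt, hlt2, hlt1]
    have := hkrull (RelSeries.fromListIsChain _ (by simp) hchain)
    simp [RelSeries.fromListIsChain] at this
  have hyη : y = η := le_antisymm (hz₂η ▸ hyz₂) (hmin y)
  -- ξ is a generic point of T' lying in the fiber
  have hξT' : ξ ∈ closure T' := by rw [← hξ]; exact subset_closure rfl
  have hfξy : f ξ = y := by
    have h1 : y ≤ f ξ := by
      have hm : f ξ ∈ closure (f '' T') := by
        apply image_closure_subset_closure_image cont
        exact ⟨ξ, hξT', rfl⟩
      rw [hTy] at hm
      rw [PrimeSpectrum.le_iff_specializes, specializes_iff_mem_closure]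
      exact hm
    obtain ⟨t, ht⟩ := hcomp.2.1.1
    have h2 : f ξ ≤ f t := by
      have hsp : ξ ⤳ t := by
        rw [specializes_iff_mem_closure, hξ]
        exact subset_closure ht
      exact (PrimeSpectrum.le_iff_specializes _ _).mpr (hsp.map cont)
    have hft : f t = y := hcomp.1 ht
    exact le_antisymm (hft ▸ h2) h1
  -- the generic point of T' is a minimal prime
  haveI hξp := ξ.2
  obtain ⟨q₀, hq₀min, hq₀le⟩ :=
    Ideal.exists_minimalPrimes_le (I := (⊥ : Ideal S)) (J := ξ.asIdeal) bot_le
  haveI hq₀p : q₀.IsPrime := hq₀min.1.1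
  set x₀ : PrimeSpectrum S := ⟨q₀, hq₀p⟩ with hx₀def
  have hfx₀ : f x₀ = y := by
    have hstep : η.asIdeal ≤ q₀.comap φ :=
      (PrimeSpectrum.asIdeal_le_asIdeal η (f x₀)).mpr (hmin (f x₀))
    obtain ⟨q'', hq''p, hq''le, hq''com⟩ := flat_going_down φ hflat q₀ hq₀p η.asIdeal η.2 hstep
    have hq''eq : q'' = q₀ := le_antisymm hq''le (hq₀min.2 ⟨hq''p, bot_le⟩ hq''le)
    have : (f x₀).asIdeal = η.asIdeal := by
      show Ideal.comap φ q₀ = η.asIdeal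
      rw [← hq''eq, hq''com]
    rw [hyη]
    exact PrimeSpectrum.ext this
  have hx₀ξ : x₀ ≤ ξ := (PrimeSpectrum.asIdeal_le_asIdeal _ _).mp hq₀le
  have hWcl : closure (T' ∪ {x₀}) = closure {x₀} := by
    apply Set.Subset.antisymm
    · apply closure_minimal _ isClosed_closure
      rintro w (hw | rfl)
      · have hw1 : w ∈ closure {ξ} := by rw [hξ]; exact subset_closure hw
        exact specializes_iff_closure_subset.mp
          ((PrimeSpectrum.le_iff_specializes _ _).mp hx₀ξ) hw1
      · exact subset_closure rfl
    · exact closure_mono (by simp)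
  have hWirr : IsIrreducible (T' ∪ {x₀}) :=
    isIrreducible_iff_closure.mp (hWcl ▸ isIrreducible_singleton.closure)
  have hWeq : T' ∪ {x₀} = T' := by
    apply hcomp.2.2 _ hWirr Set.subset_union_left
    rintro w (hw | rfl)
    · exact hcomp.1 hw
    · simpa using hfx₀
  have hx₀T' : x₀ ∈ T' := by rw [← hWeq]; exact Set.mem_union_right _ rfl
  have hξx₀ : ξ ≤ x₀ := by
    rw [PrimeSpectrum.le_iff_specializes, specializes_iff_mem_closure, hξ]
    exact subset_closure hx₀T'
  have hξmin : ξ.asIdeal ∈ minimalPrimes S := by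
    have heq : q₀ = ξ.asIdeal :=
      le_antisymm hq₀le ((PrimeSpectrum.asIdeal_le_asIdeal _ _).mpr hξx₀)
    rwa [heq] at hq₀min
  -- going down twice under xT
  have h1le : z₁.asIdeal ≤ xT.asIdeal.comap φ := by
    rw [← PrimeSpectrum.comap_asIdeal]
    exact (PrimeSpectrum.asIdeal_le_asIdeal _ _).mpr hlt1.le
  obtain ⟨Q₁, hQ₁p, hQ₁le, hQ₁com⟩ := flat_going_down φ hflat xT.asIdeal xT.2 z₁.asIdeal z₁.2 h1le
  have h2le : η.asIdeal ≤ Q₁.comap φ := by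
    rw [hQ₁com]
    exact (PrimeSpectrum.asIdeal_le_asIdeal _ _).mpr (hmin z₁)
  obtain ⟨Q₂, hQ₂p, hQ₂le, hQ₂com⟩ := flat_going_down φ hflat Q₁ hQ₁p η.asIdeal η.2 h2le
  have hQ₂lt : Q₂ < Q₁ := lt_of_le_of_ne hQ₂le (by
    intro h
    have : η = z₁ := PrimeSpectrum.ext (by rw [← hQ₂com, h, hQ₁com])
    exact absurd (this ▸ hz₂η ▸ hlt2) (lt_irrefl _))
  have hQ₁lt : Q₁ < xT.asIdeal := lt_of_le_of_ne hQ₁le (by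
    intro h
    have : z₁ = f xT := PrimeSpectrum.ext (by rw [← hQ₁com, h, PrimeSpectrum.comap_asIdeal])
    exact absurd (this ▸ hlt1) (lt_irrefl _))
  obtain ⟨q₀', hq₀'min, hq₀'le⟩ :=
    Ideal.exists_minimalPrimes_le (I := (⊥ : Ideal S)) (J := Q₂) bot_le
  haveI hq₀'p : q₀'.IsPrime := hq₀'min.1.1
  have hcoh' : Order.coheight (⟨q₀', hq₀'p⟩ : PrimeSpectrum S) = 2 := hequi q₀' hq₀'min hq₀'p
  have hcohS : ∀ p : LTSeries (PrimeSpectrum S),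
      (⟨q₀', hq₀'p⟩ : PrimeSpectrum S) ≤ p.head → p.length ≤ 2 := fun p hp => by
    have := Order.length_le_coheight hp
    rw [hcoh'] at this
    exact_mod_cast this
  have hq₀'Q₂ : q₀' = Q₂ := by
    by_contra hne
    have hlt : (⟨q₀', hq₀'p⟩ : PrimeSpectrum S) < ⟨Q₂, hQ₂p⟩ :=
      lt_of_le_of_ne ((PrimeSpectrum.asIdeal_le_asIdeal _ _).mp hq₀'le)
        (fun h => hne (congrArg PrimeSpectrum.asIdeal h))
    have hchain : List.IsChain (· < ·)
        [(⟨q₀', hq₀'p⟩ : PrimeSpectrum S), ⟨Q₂, hQ₂p⟩, ⟨Q₁, hQ₁p⟩, xT] := by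
      refine List.IsChain.cons_cons hlt (List.IsChain.cons_cons ?_ (List.IsChain.cons_cons ?_ (List.isChain_singleton _)))
      · exact hQ₂lt
      · exact hQ₁lt
    have := hcohS (RelSeries.fromListIsChain _ (by simp) hchain) (le_of_eq rfl)
    simp [RelSeries.fromListIsChain] at this
  have hxTmax : xT = IsLocalRing.closedPoint S := by
    by_contra hne
    have hltc : xT < IsLocalRing.closedPoint S :=
      lt_of_le_of_ne ((PrimeSpectrum.asIdeal_le_asIdeal _ _).mp
        (IsLocalRing.le_maximalIdeal xT.2.ne_top)) hne
    have hchain : List.IsChain (· < ·)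
        [(⟨Q₂, hQ₂p⟩ : PrimeSpectrum S), ⟨Q₁, hQ₁p⟩, xT, IsLocalRing.closedPoint S] := by
      refine List.IsChain.cons_cons hQ₂lt (List.IsChain.cons_cons hQ₁lt
        (List.IsChain.cons_cons hltc (List.isChain_singleton _)))
    have := hcohS (RelSeries.fromListIsChain _ (by simp) hchain)
      (le_of_eq (by simp [RelSeries.fromListIsChain, hq₀'Q₂, RelSeries.head]))
    simp [RelSeries.fromListIsChain] at this
  -- a chain of length 2 above ξ
  have hcohξ : Order.coheight ξ = 2 := by
    have := hequi ξ.asIdeal hξmin ξ.2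
    simpa using this
  obtain ⟨pp, hpphead, hpplen⟩ := Order.exists_series_of_coheight_eq_coe ξ (n := 2) hcohξ
  have hppmono := pp.strictMono
  set a : PrimeSpectrum S := pp ⟨1, by omega⟩ with hadef
  set b : PrimeSpectrum S := pp ⟨2, by omega⟩ with hbdef
  have hξa : ξ < a := by
    rw [← hpphead]
    exact hppmono (by simp [RelSeries.head, Fin.lt_def])
  have hab : a < b := hppmono (by simp [Fin.lt_def])
  have hbxT : b ≤ xT := by
    rw [hxTmax]
    exact (PrimeSpectrum.asIdeal_le_asIdeal _ _).mp (IsLocalRing.le_maximalIdeal b.2.ne_top)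
  have haxT : a < xT := lt_of_lt_of_le hab hbxT
  -- final contradiction with hcodim
  set clT' : IrreducibleCloseds (PrimeSpectrum S) :=
    ⟨closure T', hcomp.2.1.closure, isClosed_closure⟩ with hclT'def
  have hclT'gp : closure {ξ} = (clT' : Set (PrimeSpectrum S)) := hξ
  have hptICa : closure {a} = ((ptIC a : IrreducibleCloseds (PrimeSpectrum S)) :
      Set (PrimeSpectrum S)) := rfl
  have m1 : T < ptIC a := (ic_lt_iff hxT hptICa).mpr haxT
  have m2 : ptIC a ≤ clT' := (ic_le_iff hptICa hclT'gp).mpr hξa.le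
  have m3 : T < clT' := (ic_lt_iff hxT hclT'gp).mpr (lt_trans hξa haxT)
  have m4 : ptIC a < clT' := (ic_lt_iff hptICa hclT'gp).mpr hξa
  have hfin : (2 : ℕ∞) ≤ icCodim T clT' := by
    have := Set.encard_le_chainHeight_of_isChain (r := (· < ·)) {Z | T < Z ∧ Z ≤ clT'}
      {ptIC a, clT'} (by
        intro Z hZ
        rcases hZ with rfl | rfl
        · exact ⟨m1, m2⟩
        · exact ⟨m3, le_refl _⟩) (by
        intro x hx y hy hxy
        rcases hx with rfl | rfl <;> rcases hy with rfl | rfl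
        · exact absurd rfl hxy
        · exact Or.inl m4
        · exact Or.inr m4
        · exact absurd rfl hxy)
    rw [Set.encard_pair m4.ne] at this
    exact this
  rw [hcodim] at hfin
  exact absurd hfin (by norm_num)
end

section
/- Let X and Y be Noetherian schemes of finite Krull dimension whose underlying topological spaces are biequidimensional. Then every finite, flat, and surjective morphism f : X → Y has relative codimension 0: for every point x ∈ X, codim(cl({f(x)}), Y) = codim(cl({x}), X). -/
open TopologicalSpace

section AuxProofs

open TensorProduct in
theorem lyingOver_of_flat_localHom {A B : Type*} [CommRing A] [CommRing B]
    [IsLocalRing A] [IsLocalRing B] (φ : A →+* B) [IsLocalHom φ] (hφ : φ.Flat)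
    (p : PrimeSpectrum A) : ∃ q : PrimeSpectrum B, PrimeSpectrum.comap φ q = p := by
  algebraize [φ]
  have hmap : Ideal.map (algebraMap A B) (IsLocalRing.maximalIdeal A) ≤
      IsLocalRing.maximalIdeal B := by
    rw [Ideal.map_le_iff_le_comap]
    intro a ha
    simp only [Ideal.mem_comap, IsLocalRing.mem_maximalIdeal, mem_nonunits_iff]
    intro hu
    exact ha (isUnit_of_map_unit φ a hu)
  have hff : Module.FaithfullyFlat A B := by
    refine ⟨fun m hm heq => ?_⟩
    rw [IsLocalRing.eq_maximalIdeal hm, Ideal.smul_top_eq_map] at heq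
    have : Ideal.map (algebraMap A B) (IsLocalRing.maximalIdeal A) = ⊤ := by
      have := congrArg (fun s => (1 : B) ∈ s) heq
      simp only [Submodule.mem_top, iff_true, eq_iff_iff] at this
      exact (Ideal.eq_top_iff_one _).mpr this
    exact (IsLocalRing.maximalIdeal.isMaximal B).ne_top (top_le_iff.mp (this ▸ hmap))
  set κ := IsLocalRing.ResidueField (Localization.AtPrime p.asIdeal) with hκ
  have : Nontrivial (κ ⊗[A] B) := Module.FaithfullyFlat.rTensor_nontrivial A B κ
  obtain ⟨q'⟩ : Nonempty (PrimeSpectrum (κ ⊗[A] B)) := inferInstance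
  refine ⟨PrimeSpectrum.comap
    (Algebra.TensorProduct.includeRight (R := A) (A := κ) (B := B)).toRingHom q', ?_⟩
  rw [← PrimeSpectrum.comap_comp_apply]
  have h1 : (Algebra.TensorProduct.includeRight (R := A) (A := κ) (B := B)).toRingHom.comp φ
      = (algebraMap κ (κ ⊗[A] B)).comp (algebraMap A κ) := by
    ext a
    show (1 : κ) ⊗ₜ[A] φ a = algebraMap κ (κ ⊗[A] B) (algebraMap A κ a)
    rw [Algebra.TensorProduct.algebraMap_apply]
    show (1 : κ) ⊗ₜ[A] φ a = (algebraMap A κ a) ⊗ₜ[A] (1 : B)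
    rw [Algebra.algebraMap_eq_smul_one (A := κ), TensorProduct.smul_tmul]
    congr 1
    rw [Algebra.smul_def, mul_one]
    rfl
  rw [h1, PrimeSpectrum.comap_comp_apply]
  have hbot : (PrimeSpectrum.comap (algebraMap κ (κ ⊗[A] B)) q').asIdeal = ⊥ :=
    (Ideal.eq_bot_or_top _).resolve_right
      (PrimeSpectrum.comap (algebraMap κ (κ ⊗[A] B)) q').isPrime.ne_top
  ext x
  show x ∈ Ideal.comap (algebraMap A κ) _ ↔ _
  rw [hbot]
  simp only [Ideal.mem_comap, Ideal.mem_bot]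
  rw [IsScalarTower.algebraMap_eq A (Localization.AtPrime p.asIdeal) κ]
  simp only [RingHom.comp_apply]
  rw [IsLocalRing.ResidueField.algebraMap_eq, IsLocalRing.residue_eq_zero_iff]
  exact IsLocalization.AtPrime.to_map_mem_maximal_iff _ p.asIdeal x

open AlgebraicGeometry in
theorem generalizing_of_flat {X Y : Scheme} (f : X ⟶ Y) (hflat : SchemeHomFlat f)
    (x : X) (y' : Y) (h : y' ⤳ f.base x) :
    ∃ x' : X, x' ⤳ x ∧ f.base x' = y' := by
  obtain ⟨q, hq⟩ : y' ∈ Set.range (Y.fromSpecStalk (f.base x)).base := by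
    rw [Scheme.range_fromSpecStalk]; exact h
  obtain ⟨p, hp⟩ := lyingOver_of_flat_localHom (f.stalkMap x).hom (hflat x) q
  refine ⟨(X.fromSpecStalk x).base p, ?_, ?_⟩
  · have : (X.fromSpecStalk x).base p ∈ Set.range (X.fromSpecStalk x).base := ⟨p, rfl⟩
    rwa [Scheme.range_fromSpecStalk] at this
  · have h2 := congrArg (fun g : Spec (X.presheaf.stalk x) ⟶ Y => g.base p)
      (Scheme.SpecMap_stalkMap_fromSpecStalk f (x := x))
    change (Y.fromSpecStalk (f.base x)).base (PrimeSpectrum.comap (f.stalkMap x).hom p) =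
      f.base ((X.fromSpecStalk x).base p) at h2
    rw [hp, hq] at h2
    exact h2.symm

open AlgebraicGeometry CategoryTheory in
theorem incomp_of_integral {X Y : Scheme} (f : X ⟶ Y) [IsIntegralHom f]
    (a b : X) (hab : a ⤳ b) (hf : f.base a = f.base b) : a = b := by
  obtain ⟨_, ⟨U, hU, rfl⟩, hyU, -⟩ := (Scheme.isBasis_affineOpens Y).exists_subset_of_mem_open
    (Set.mem_univ (f.base a)) isOpen_univ
  have hV : IsAffineOpen (f ⁻¹ᵁ U) := hU.preimage f
  haveI : IsAffine (U : Scheme) := hU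
  haveI : IsAffine ((f ⁻¹ᵁ U) : Scheme) := hV
  haveI hres : IsIntegralHom (f ∣_ U) := inferInstance
  obtain ⟨-, hint⟩ := (@HasAffineProperty.iff_of_isAffine _ _ IsIntegralHom.hasAffineProperty _ _
    (f ∣_ U) _).mp hres
  set g := f ∣_ U with hg
  have haU : a ∈ f ⁻¹ᵁ U := hyU
  have hbU : b ∈ f ⁻¹ᵁ U := by show f.base b ∈ U; rw [← hf]; exact hyU
  set a' : ((f ⁻¹ᵁ U) : Scheme) := ⟨a, haU⟩ with ha'
  set b' : ((f ⁻¹ᵁ U) : Scheme) := ⟨b, hbU⟩ with hb'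
  have hab' : a' ⤳ b' := by
    exact Topology.IsInducing.subtypeVal.specializes_iff.mp hab
  have hB : ⇑g.base = U.carrier.restrictPreimage f.base := morphismRestrict_base f U
  have hgab : g.base a' = g.base b' := by
    rw [show g.base a' = _ from congrFun hB a', show g.base b' = _ from congrFun hB b']
    exact Subtype.ext hf
  -- transfer to Spec
  have hnat := Scheme.isoSpec_hom_naturality g
  have hnat_a := congrArg (fun h : ((f ⁻¹ᵁ U) : Scheme) ⟶ Spec _ => h.base a') hnat
  have hnat_b := congrArg (fun h : ((f ⁻¹ᵁ U) : Scheme) ⟶ Spec _ => h.base b') hnat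
  simp only [Scheme.Hom.comp_base, TopCat.comp_app] at hnat_a hnat_b
  set eW := ((f ⁻¹ᵁ U) : Scheme).isoSpec
  set pa : PrimeSpectrum Γ(((f ⁻¹ᵁ U) : Scheme), ⊤) := eW.hom.base a' with hpa
  set pb : PrimeSpectrum Γ(((f ⁻¹ᵁ U) : Scheme), ⊤) := eW.hom.base b' with hpb
  have hspec : pa ⤳ pb := hab'.map eW.hom.base.hom.2
  have hcomap : PrimeSpectrum.comap g.appTop.hom pa = PrimeSpectrum.comap g.appTop.hom pb := by
    rw [← Spec.map_apply, ← Spec.map_apply, hnat_a, hnat_b, hgab]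
  have hpapb : pa = pb := by
    by_contra hne
    have hle : pa ≤ pb := (PrimeSpectrum.le_iff_specializes pa pb).mpr hspec
    have hlt : pa.asIdeal < pb.asIdeal := lt_of_le_of_ne hle
      (fun h => hne (PrimeSpectrum.ext h))
    obtain ⟨s, hsb, hsa⟩ := SetLike.exists_of_lt hlt
    set φ : Γ((U : Scheme), ⊤) →+* Γ(((f ⁻¹ᵁ U) : Scheme), ⊤) := g.appTop.hom with hφ
    have hI : RingHom.IsIntegral φ := hint
    clear hint
    algebraize [φ]
    have hcc : pa.asIdeal.comap (algebraMap Γ((U : Scheme), ⊤) Γ(((f ⁻¹ᵁ U) : Scheme), ⊤)) <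
        pb.asIdeal.comap (algebraMap _ _) :=
      Ideal.comap_lt_comap_of_integral_mem_sdiff hlt.le ⟨hsb, hsa⟩ (hI s)
    have heq : pa.asIdeal.comap φ = pb.asIdeal.comap φ :=
      congrArg PrimeSpectrum.asIdeal hcomap
    exact hcc.ne heq
  have : a' = b' := by
    have h2 := congrArg (eW.inv.base) hpapb
    rwa [← Scheme.Hom.comp_apply, ← Scheme.Hom.comp_apply, eW.hom_inv_id,
      Scheme.Hom.id_base, TopCat.id_app, TopCat.id_app] at h2
  exact congrArg Subtype.val this

/-- The strict specialization order as a bare `LT` instance. -/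
def sLT (γ : Type*) [TopologicalSpace γ] : LT γ := ⟨fun a b => b ⤳ a ∧ ¬ a ⤳ b⟩

theorem spCodim_ptIC_eq {γ : Type*} [TopologicalSpace γ] [T0Space γ] [QuasiSober γ] (z : γ) :
    spCodim (ptIC z) = Set.chainHeight {w : γ | w ⤳ z ∧ ¬ z ⤳ w} (@LT.lt γ (sLT γ)) := by
  letI := specializationOrder γ
  have himg : {Z : IrreducibleCloseds γ | ptIC z < Z}
      = irreducibleSetEquivPoints.symm '' {w : γ | w ⤳ z ∧ ¬ z ⤳ w} := by
    ext Z
    constructor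
    · intro hZ
      refine ⟨irreducibleSetEquivPoints Z, ?_, by simp⟩
      show z < irreducibleSetEquivPoints Z
      rw [← OrderIso.lt_iff_lt (irreducibleSetEquivPoints (α := γ)).symm]
      have hZ' : irreducibleSetEquivPoints.symm z < Z := hZ
      simpa using hZ'
    · rintro ⟨w, hw, rfl⟩
      show ptIC z < irreducibleSetEquivPoints.symm w
      exact (OrderIso.lt_iff_lt (irreducibleSetEquivPoints (α := γ)).symm).mpr hw
  rw [spCodim, himg]
  exact Set.chainHeight_eq_of_relIso _ (irreducibleSetEquivPoints (α := γ)).symm.toRelIsoLT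

theorem chainHeight_spec_eq {α β : Type*} [TopologicalSpace α] [TopologicalSpace β]
    [T0Space β] (g : α → β) (hg : Continuous g)
    (H1 : ∀ a b : α, g a = g b → a ⤳ b → a = b)
    (H2 : ∀ (a : α) (y : β), y ⤳ g a → ∃ a', a' ⤳ a ∧ g a' = y) (x : α) :
    Set.chainHeight {w : β | w ⤳ g x ∧ ¬ g x ⤳ w} (@LT.lt β (sLT β))
      = Set.chainHeight {w : α | w ⤳ x ∧ ¬ x ⤳ w} (@LT.lt α (sLT α)) := by
  letI := specializationPreorder α
  letI := specializationPreorder β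
  have hmono : ∀ a a' : α, a < a' → g a < g a' := by
    rintro a a' ⟨h1, h2⟩
    refine ⟨h1.map hg, fun hc => h2 ?_⟩
    have : g a = g a' := (hc.antisymm (h1.map hg)).eq
    have := H1 a' a this.symm h1
    rw [this]
  change Set.chainHeight {w : β | g x < w} (· < ·) = Set.chainHeight {w : α | x < w} (· < ·)
  apply le_antisymm
  · -- lift chains from β to α
    rw [← ENat.forall_natCast_le_iff_le]
    have aux : ∀ (n : ℕ) (a : α) (t : Set β), t ⊆ {w | g a < w} → IsChain (· < ·) t →
        t.encard = n → ∃ t' : Set α, t' ⊆ {w | a < w} ∧ IsChain (· < ·) t' ∧ t'.encard = n := by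
      intro n
      induction n with
      | zero => intro a t _ _ _; exact ⟨∅, by simp, by simp [IsChain], by simp⟩
      | succ n ih =>
        intro a t hts htc hte
        have hfin : t.Finite := Set.finite_of_encard_eq_coe hte
        have hne : t.Nonempty := by
          rw [← Set.encard_pos, hte]; exact_mod_cast Nat.succ_pos n
        obtain ⟨b, hbmin⟩ := hfin.exists_minimal hne
        have hbt : b ∈ t := hbmin.prop
        obtain ⟨a', ha'a, hga'⟩ := H2 a b (hts hbt).1
        have hslt : a < a' := ⟨ha'a, fun hc => (hts hbt).2 (hga' ▸ hc.map hg)⟩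
        have hsub : t \ {b} ⊆ {w | g a' < w} := by
          rintro w ⟨hwt, hwb⟩
          show g a' < w
          rw [hga']
          rcases htc hbt hwt (Ne.symm hwb) with h | h
          · exact h
          · exact (hbmin.not_lt hwt h).elim
        have hte' : (t \ {b}).encard = n := by
          rw [Set.encard_diff_singleton_of_mem hbt, hte, ← ENat.natCast_one, ← ENat.natCast_sub]; simp
        obtain ⟨t'', ht''s, ht''c, ht''e⟩ := ih a' (t \ {b}) hsub (htc.mono Set.diff_subset) hte'
        have ha'n : a' ∉ t'' := fun h => lt_irrefl a' (ht''s h)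
        refine ⟨insert a' t'', ?_, ?_, ?_⟩
        · rintro w (rfl | hw)
          · exact hslt
          · exact lt_trans hslt (ht''s hw)
        · exact ht''c.insert fun c hc _ => Or.inl (ht''s hc)
        · rw [Set.encard_insert_of_notMem ha'n, ht''e]; push_cast; rfl
    intro n hn
    obtain ⟨t, hts, hte, htc⟩ := Set.exists_isChain_of_le_chainHeight n hn
    obtain ⟨t', ht's, ht'c, ht'e⟩ := aux n x t hts htc hte
    rw [← ht'e]
    exact Set.encard_le_chainHeight_of_isChain _ _ ht's ht'c
  · -- push chains from α to β
    rw [← ENat.forall_natCast_le_iff_le]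
    intro n hn
    obtain ⟨t, hts, hte, htc⟩ := Set.exists_isChain_of_le_chainHeight n hn
    have hinj : Set.InjOn g t := by
      intro a ha b hb hab
      by_contra hne
      rcases htc ha hb hne with h | h
      · exact (hmono a b h).ne hab
      · exact (hmono b a h).ne hab.symm
    rw [← hte, ← hinj.encard_image]
    refine Set.encard_le_chainHeight_of_isChain _ _ ?_ ?_
    · rintro _ ⟨a, ha, rfl⟩; exact hmono x a (hts ha)
    · exact IsChain.image_of_map_rel _ _ g (fun a b h => hmono a b h) htc

end AuxProofs

/-- A finite, flat, surjective morphism between biequidimensional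
Noetherian schemes of finite Krull dimension has relative codimension `0`:
`codim(cl {f x}, Y) = codim(cl {x}, X)` for every point `x`. -/
theorem statement10 {X Y : AlgebraicGeometry.Scheme} (f : X ⟶ Y)
    [AlgebraicGeometry.IsNoetherian X] [AlgebraicGeometry.IsNoetherian Y]
    (hdX : topologicalKrullDim X ≠ ⊤) (hdY : topologicalKrullDim Y ≠ ⊤)
    (hbX : BiequidimensionalSpace X) (hbY : BiequidimensionalSpace Y)
    [AlgebraicGeometry.IsFinite f] [AlgebraicGeometry.Surjective f]
    (hflat : SchemeHomFlat f) :
    ∀ x : X, spCodim (ptIC (f.base x)) = spCodim (ptIC x) := by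
  intro x
  rw [spCodim_ptIC_eq, spCodim_ptIC_eq]
  exact chainHeight_spec_eq f.base f.base.hom.2
    (fun a b hab h => incomp_of_integral f a b h hab)
    (generalizing_of_flat f hflat) x
end
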